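/- arXiv:1412.8693 — 7 statements merged into one kernel-verified Lean document; each statement's English description precedes it below -/
import Mathlib

section
/- For any convex body K in R^n, the Minkowski asymmetry of K equals the Banach–Mazur distance from K to its difference body K−K, and this is the minimum Banach–Mazur distance from K to any centrally symmetric convex body. -/
open Set Pointwise

/-- `V n` is `ℝ^n` (as a Euclidean space, also used as carrier for general
Minkowski spaces whose unit ball `B` is given as a set). -/
abbrev V (n : ℕ) := EuclideanSpace ℝ (Fin n)

/-- A convex body: compact, convex, with nonempty interior. -/
def IsConvexBody {n : ℕ} (K : Set (V n)) : Prop :=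
  Convex ℝ K ∧ IsCompact K ∧ (interior K).Nonempty

/-- A (centrally) symmetric unit ball of a norm. -/
def IsSymUnitBall {n : ℕ} (B : Set (V n)) : Prop :=
  IsConvexBody B ∧ B = -B

/-- Circumradius of `K` with respect to the unit ball `B`. -/
noncomputable def circum {n : ℕ} (B K : Set (V n)) : ℝ :=
  sInf {ρ : ℝ | 0 < ρ ∧ ∃ c : V n, K ⊆ c +ᵥ ρ • B}

/-- Inradius of `K` with respect to the unit ball `B`. -/
noncomputable def inrad {n : ℕ} (B K : Set (V n)) : ℝ :=
  sSup {ρ : ℝ | 0 < ρ ∧ ∃ c : V n, c +ᵥ ρ • B ⊆ K}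

/-- Diameter of `K` in the norm with unit ball `B` (via the Minkowski gauge). -/
noncomputable def mdiam {n : ℕ} (B K : Set (V n)) : ℝ :=
  sSup {d : ℝ | ∃ x ∈ K, ∃ y ∈ K, d = gauge B (x - y)}

/-- Minkowski asymmetry of `K`. -/
noncomputable def asym {n : ℕ} (K : Set (V n)) : ℝ :=
  sInf {ρ : ℝ | 0 < ρ ∧ ∃ c : V n, -K ⊆ c +ᵥ ρ • K}

/-- `K` is complete (diametrically maximal) w.r.t. the unit ball `B`. -/
def IsCompleteBody {n : ℕ} (B K : Set (V n)) : Prop :=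
  IsConvexBody K ∧ ∀ x : V n, x ∉ K → mdiam B K < mdiam B (K ∪ {x})

/-- `Kstar` is a completion of `K` w.r.t. the unit ball `B`. -/
def IsCompletionOf {n : ℕ} (B Kstar K : Set (V n)) : Prop :=
  IsCompleteBody B Kstar ∧ K ⊆ Kstar ∧ mdiam B Kstar = mdiam B K

/-- Jung ratio `R(K)/D(K)`. -/
noncomputable def jungRatio {n : ℕ} (B K : Set (V n)) : ℝ :=
  circum B K / mdiam B K

/-- Jung constant of the Minkowski space with unit ball `B`. -/
noncomputable def jungConst {n : ℕ} (B : Set (V n)) : ℝ :=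
  sSup {j : ℝ | ∃ K : Set (V n), IsConvexBody K ∧ j = jungRatio B K}

/-- Maximal Minkowski asymmetry over complete bodies. -/
noncomputable def asymConst {n : ℕ} (B : Set (V n)) : ℝ :=
  sSup {s : ℝ | ∃ K : Set (V n), IsCompleteBody B K ∧ s = asym K}

/-- Banach–Mazur distance between `K` and `C`. -/
noncomputable def dBM {n : ℕ} (K C : Set (V n)) : ℝ :=
  sInf {ρ : ℝ | 0 < ρ ∧ ∃ (A : (V n) ≃ᵃ[ℝ] (V n)) (x : V n),
    K ⊆ A '' C ∧ A '' C ⊆ x +ᵥ ρ • K}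

/-- `S` is a `k`-dimensional simplex. -/
def IsSimplexDim {n : ℕ} (k : ℕ) (S : Set (V n)) : Prop :=
  ∃ v : Fin (k + 1) → V n, AffineIndependent ℝ v ∧ S = convexHull ℝ (Set.range v)

/-- Helly property with parameter `k` for translates of `B`. -/
def HellyProp {n : ℕ} (B : Set (V n)) (k : ℕ) : Prop :=
  ∀ X : Set (V n), X.Nonempty →
    (∀ J : Finset (V n), ↑J ⊆ X → J.card ≤ k + 1 →
      (⋂ x ∈ (J : Set (V n)), (x +ᵥ B)).Nonempty) →
    (⋂ x ∈ X, (x +ᵥ B)).Nonempty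

/-- Helly dimension of `B`: the least positive `k` with the Helly property. -/
noncomputable def hellyDim {n : ℕ} (B : Set (V n)) : ℕ :=
  sInf {k : ℕ | 0 < k ∧ HellyProp B k}

/-- `K` is of constant width w.r.t. the unit ball `B`: `K - K` is a dilate of `B`. -/
def IsConstWidth {n : ℕ} (B K : Set (V n)) : Prop :=
  ∃ γ : ℝ, 0 < γ ∧ K - K = γ • B

/-- A regular `n`-simplex in Euclidean space. -/
def IsRegularSimplex {n : ℕ} (T : Set (V n)) : Prop :=
  ∃ v : Fin (n + 1) → V n, AffineIndependent ℝ v ∧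
    (∀ i j k l, i ≠ j → k ≠ l → dist (v i) (v j) = dist (v k) (v l)) ∧
    T = convexHull ℝ (Set.range v)

/-- The Euclidean unit ball in `ℝ^n`. -/
noncomputable def euclBall (n : ℕ) : Set (V n) := Metric.closedBall 0 1

/-- Pseudo completion of `K` with respect to the circumcenter `c`. -/
noncomputable def pseudoCompletion {n : ℕ} (B K : Set (V n)) (c : V n) : Set (V n) :=
  convexHull ℝ (K ∪ (c +ᵥ (mdiam B K - circum B K) • B))

section BMAux

variable {n : ℕ}

/-- Any convex body is sandwiched between two concentric closed balls. -/
lemma body_balls {K : Set (V n)} (hK : IsConvexBody K) :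
    ∃ (c : V n) (r R : ℝ), 0 < r ∧ 0 < R ∧
      Metric.closedBall c r ⊆ K ∧ K ⊆ Metric.closedBall c R := by
  obtain ⟨c, hc⟩ := hK.2.2
  rw [mem_interior_iff_mem_nhds, Metric.mem_nhds_iff] at hc
  obtain ⟨ε, hε, hball⟩ := hc
  obtain ⟨R, hR⟩ := hK.2.1.isBounded.subset_closedBall c
  refine ⟨c, ε / 2, max R 1, by linarith, by positivity, ?_, ?_⟩
  · exact (Metric.closedBall_subset_ball (by linarith)).trans hball
  · exact hR.trans (Metric.closedBall_subset_closedBall (le_max_left _ _))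

/-- A symmetric body contains a closed ball centered at the origin. -/
lemma sym_ball {B : Set (V n)} (hB : IsSymUnitBall B) :
    ∃ ε : ℝ, 0 < ε ∧ Metric.closedBall (0 : V n) ε ⊆ B := by
  obtain ⟨c, r, R, hr, hR, hcb, _⟩ := body_balls hB.1
  refine ⟨r, hr, fun x hx => ?_⟩
  have hx' : ‖x‖ ≤ r := by simpa [dist_eq_norm] using hx
  have ha : c + x ∈ B := hcb (by simpa [dist_eq_norm] using hx')
  have hb : -c + x ∈ B := by
    have h1 : c + -x ∈ B := hcb (by simpa [dist_eq_norm] using hx')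
    have h2 : -(c + -x) ∈ -B := Set.neg_mem_neg.mpr h1
    rw [← hB.2] at h2
    have h3 : x + -c ∈ B := by simpa [neg_add] using h2
    simpa [add_comm] using h3
  have hcomb := hB.1.1 ha hb (by norm_num : (0:ℝ) ≤ 1/2) (by norm_num : (0:ℝ) ≤ 1/2)
    (by norm_num)
  have hxe : (1/2 : ℝ) • (c + x) + (1/2 : ℝ) • (-c + x) = x := by module
  rwa [hxe] at hcomb

/-- The set defining the Minkowski asymmetry is nonempty. -/
lemma asym_set_nonempty {K : Set (V n)} (hK : IsConvexBody K) :
    ∃ ρ : ℝ, 0 < ρ ∧ ∃ c : V n, -K ⊆ c +ᵥ ρ • K := by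
  obtain ⟨c0, r, R, hr, hR, h1, h2⟩ := body_balls hK
  have hrR : (0:ℝ) < R / r := by positivity
  refine ⟨R / r, hrR, -c0 - (R / r) • c0, fun y hy => ?_⟩
  have hyK : -y ∈ K := Set.mem_neg.mp hy
  refine Set.mem_vadd_set.mpr ⟨(R / r) • ((R / r)⁻¹ • (y + c0) + c0),
    Set.smul_mem_smul_set (h1 ?_), ?_⟩
  · simp only [Metric.mem_closedBall, dist_eq_norm, add_sub_cancel_right, norm_smul,
      norm_inv, Real.norm_eq_abs, abs_of_pos hrR]
    have hn : ‖y + c0‖ ≤ R := by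
      have h3 := h2 hyK
      simp only [Metric.mem_closedBall, dist_eq_norm] at h3
      calc ‖y + c0‖ = ‖-y - c0‖ := by rw [← norm_neg]; congr 1; abel
        _ ≤ R := h3
    calc (R / r)⁻¹ * ‖y + c0‖ ≤ (R / r)⁻¹ * R := by gcongr
      _ = r := by field_simp
  · rw [vadd_eq_add, smul_add, smul_smul, mul_inv_cancel₀ hrR.ne', one_smul]
    abel

/-- From a Banach–Mazur sandwich with a symmetric body one obtains an
asymmetry witness with the same factor. -/
lemma asym_wit_of_bm {K B : Set (V n)} (hBsym : B = -B) {ρ : ℝ}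
    (A : (V n) ≃ᵃ[ℝ] (V n)) (x : V n)
    (h1 : K ⊆ A '' B) (h2 : A '' B ⊆ x +ᵥ ρ • K) :
    ∃ c : V n, -K ⊆ c +ᵥ ρ • K := by
  refine ⟨x - (2 : ℝ) • A 0, fun y hy => ?_⟩
  have hyK : -y ∈ K := Set.mem_neg.mp hy
  obtain ⟨b, hb, hab⟩ := h1 hyK
  have hnb : -b ∈ B := by rw [hBsym]; exact Set.neg_mem_neg.mpr hb
  obtain ⟨z, hz, hxz⟩ := Set.mem_vadd_set.mp (h2 ⟨-b, hnb, rfl⟩)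
  have hlin : ∀ w : V n, A w = A.linear w + A 0 := by
    intro w
    have h := A.map_vadd 0 w
    simpa [vadd_eq_add] using h
  have key : A (-b) = (2:ℝ) • A 0 - A b := by
    have hAb := hlin b
    have hAnb := hlin (-b)
    simp only [map_neg] at hAnb
    have hL : (A.linear : V n → V n) b = A b - A 0 := by rw [hAb]; abel
    rw [hAnb, hL]; module
  rw [vadd_eq_add] at hxz
  -- hxz : x + z = A (-b) ;  hab : A b = -y
  refine Set.mem_vadd_set.mpr ⟨z, hz, ?_⟩
  rw [vadd_eq_add]
  have : x + z = (2:ℝ) • A 0 - A b := by rw [hxz, key]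
  calc x - (2:ℝ) • A 0 + z = (x + z) - (2:ℝ) • A 0 := by abel
    _ = -(A b) := by rw [this]; abel
    _ = y := by rw [hab, neg_neg]

/-- From an asymmetry witness one obtains a Banach–Mazur sandwich between `K`
and an affine image of `K - K`, with the same factor. -/
lemma bm_wit_of_asym {K : Set (V n)} (hK : Convex ℝ K) {ρ : ℝ} (hρ : 0 < ρ)
    {c : V n} (h : -K ⊆ c +ᵥ ρ • K) :
    ∃ (A : (V n) ≃ᵃ[ℝ] (V n)) (x : V n),
      K ⊆ A '' (K - K) ∧ A '' (K - K) ⊆ x +ᵥ ρ • K := by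
  have h1ρ : (0:ℝ) < 1 + ρ := by linarith
  have ht : (ρ / (1 + ρ) : ℝ) ≠ 0 := by positivity
  refine ⟨(LinearEquiv.smulOfNeZero ℝ (V n) (ρ / (1 + ρ)) ht).toAffineEquiv.trans
      (AffineEquiv.constVAdd ℝ (V n) (-((1 + ρ)⁻¹ • c))), ((ρ - 1)/(1+ρ)) • c, ?_, ?_⟩
  · intro k hk
    obtain ⟨z, hz, hcz⟩ := Set.mem_vadd_set.mp (h (Set.neg_mem_neg.mpr hk))
    obtain ⟨k2, hk2, rfl⟩ := hz
    rw [vadd_eq_add] at hcz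
    -- hcz : c + ρ • k2 = -k
    have e1 : k2 = ρ⁻¹ • (-k - c) := by
      have h3 : ρ • k2 = -k - c := by rw [← hcz]; abel
      rw [← h3, smul_smul, inv_mul_cancel₀ hρ.ne', one_smul]
    refine ⟨k - k2, Set.sub_mem_sub hk hk2, ?_⟩
    simp only [AffineEquiv.trans_apply, LinearEquiv.coe_toAffineEquiv,
      LinearEquiv.smulOfNeZero_apply, AffineEquiv.constVAdd_apply, vadd_eq_add,
      Units.smul_def, Units.val_mk0]
    rw [e1]
    match_scalars <;> field_simp <;> ring
  · rintro y ⟨w, hw, rfl⟩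
    obtain ⟨k1, hk1, k2, hk2, rfl⟩ := Set.mem_sub.mp hw
    obtain ⟨z, hz, hcz⟩ := Set.mem_vadd_set.mp (h (Set.neg_mem_neg.mpr hk2))
    obtain ⟨k3, hk3, rfl⟩ := hz
    rw [vadd_eq_add] at hcz
    -- hcz : c + ρ • k3 = -k2
    have e2 : k2 = -c - ρ • k3 := by
      have h3 : ρ • k3 = -k2 - c := by rw [← hcz]; abel
      rw [h3]; abel
    have hk' : (1+ρ)⁻¹ • k1 + (ρ/(1+ρ)) • k3 ∈ K := by
      refine hK hk1 hk3 (by positivity) (by positivity) ?_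
      field_simp
    refine Set.mem_vadd_set.mpr ⟨ρ • ((1+ρ)⁻¹ • k1 + (ρ/(1+ρ)) • k3),
      Set.smul_mem_smul_set hk', ?_⟩
    simp only [AffineEquiv.trans_apply, LinearEquiv.coe_toAffineEquiv,
      LinearEquiv.smulOfNeZero_apply, AffineEquiv.constVAdd_apply, vadd_eq_add,
      Units.smul_def, Units.val_mk0]
    rw [e2]
    match_scalars <;> field_simp <;> ring

/-- The difference body of a convex body is a symmetric unit ball. -/
lemma diff_symBody {K : Set (V n)} (hK : IsConvexBody K) : IsSymUnitBall (K - K) := by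
  obtain ⟨x0, hx0⟩ := hK.2.2
  have hk0 : x0 ∈ K := interior_subset hx0
  refine ⟨⟨hK.1.sub hK.1, ?_, ?_⟩, ?_⟩
  · rw [sub_eq_add_neg]
    exact hK.2.1.add hK.2.1.neg
  · have hopen : IsOpen (interior K - ({x0} : Set (V n))) := isOpen_interior.sub_right
    have hsub : interior K - ({x0} : Set (V n)) ⊆ K - K :=
      Set.sub_subset_sub interior_subset (Set.singleton_subset_iff.mpr hk0)
    have hne : (interior K - ({x0} : Set (V n))).Nonempty :=
      ⟨x0 - x0, Set.sub_mem_sub hx0 rfl⟩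
    exact hne.mono (interior_maximal hsub hopen)
  · ext z
    simp only [Set.mem_neg, Set.mem_sub]
    constructor
    · rintro ⟨a, ha, b, hb, rfl⟩
      exact ⟨b, hb, a, ha, by abel⟩
    · rintro ⟨a, ha, b, hb, hab⟩
      refine ⟨b, hb, a, ha, ?_⟩
      have := congrArg Neg.neg hab
      simpa [neg_sub] using this

/-- The Banach–Mazur set to a symmetric body is nonempty. -/
lemma bm_set_nonempty {K B : Set (V n)} (hK : IsConvexBody K) (hB : IsSymUnitBall B) :
    ∃ ρ : ℝ, 0 < ρ ∧ ∃ (A : (V n) ≃ᵃ[ℝ] (V n)) (x : V n),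
      K ⊆ A '' B ∧ A '' B ⊆ x +ᵥ ρ • K := by
  obtain ⟨c0, r, R, hr, hR, hKin, hKout⟩ := body_balls hK
  obtain ⟨ε, hε, hBin⟩ := sym_ball hB
  obtain ⟨RB, hBout⟩ := hB.1.2.1.isBounded.subset_closedBall 0
  set RB' := max RB ε with hRB'_def
  have hRB : 0 < RB' := lt_of_lt_of_le hε (le_max_right _ _)
  have hBout' : B ⊆ Metric.closedBall 0 RB' :=
    hBout.trans (Metric.closedBall_subset_closedBall (le_max_left _ _))
  have ht : (0:ℝ) < R / ε := by positivity
  have hρ : (0:ℝ) < (R / ε) * RB' / r := by positivity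
  refine ⟨(R / ε) * RB' / r, hρ,
    (LinearEquiv.smulOfNeZero ℝ (V n) (R / ε) ht.ne').toAffineEquiv.trans
      (AffineEquiv.constVAdd ℝ (V n) c0), c0 - ((R / ε) * RB' / r) • c0, ?_, ?_⟩
  · intro k hk
    refine ⟨(R / ε)⁻¹ • (k - c0), hBin ?_, ?_⟩
    · simp only [Metric.mem_closedBall, dist_zero_right, norm_smul, norm_inv,
        Real.norm_eq_abs, abs_of_pos ht]
      have h1 : ‖k - c0‖ ≤ R := by
        have := hKout hk
        simpa [dist_eq_norm] using this
      calc (R / ε)⁻¹ * ‖k - c0‖ ≤ (R / ε)⁻¹ * R := by gcongr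
        _ = ε := by field_simp
    · simp only [AffineEquiv.trans_apply, LinearEquiv.coe_toAffineEquiv,
        LinearEquiv.smulOfNeZero_apply, AffineEquiv.constVAdd_apply, vadd_eq_add,
        Units.smul_def, Units.val_mk0, smul_smul, mul_inv_cancel₀ ht.ne', one_smul]
      abel
  · rintro y ⟨b, hb, rfl⟩
    have hbn : ‖b‖ ≤ RB' := by
      have := hBout' hb
      simpa using this
    refine Set.mem_vadd_set.mpr ⟨((R / ε) * RB' / r) • (c0 + (r / RB') • b),
      Set.smul_mem_smul_set (hKin ?_), ?_⟩
    · simp only [Metric.mem_closedBall, dist_eq_norm, add_sub_cancel_left, norm_smul,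
        Real.norm_eq_abs, abs_of_pos (by positivity : (0:ℝ) < r / RB')]
      calc (r / RB') * ‖b‖ ≤ (r / RB') * RB' := by gcongr
        _ = r := by field_simp
    · simp only [AffineEquiv.trans_apply, LinearEquiv.coe_toAffineEquiv,
        LinearEquiv.smulOfNeZero_apply, AffineEquiv.constVAdd_apply, vadd_eq_add,
      Units.smul_def, Units.val_mk0]
      match_scalars <;> field_simp <;> ring

end BMAux

/-- The Minkowski asymmetry equals the Banach–Mazur distance to the difference
body, and this is the minimum BM-distance to any centrally symmetric body. -/
theorem stmt0 {n : ℕ} (K : Set (V n)) (hK : IsConvexBody K) :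
    asym K = dBM K (K - K) ∧
    (∀ B : Set (V n), IsSymUnitBall B → asym K ≤ dBM K B) := by
  have key2 : ∀ B : Set (V n), IsSymUnitBall B → asym K ≤ dBM K B := by
    intro B hB
    obtain ⟨ρ0, hρ0, A0, x0, h10, h20⟩ := bm_set_nonempty hK hB
    refine le_csInf ⟨ρ0, hρ0, A0, x0, h10, h20⟩ ?_
    rintro ρ ⟨hρ, A, x, h1, h2⟩
    obtain ⟨c, hc⟩ := asym_wit_of_bm hB.2 A x h1 h2
    exact csInf_le ⟨0, fun a ha => ha.1.le⟩ ⟨hρ, c, hc⟩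
  have hsym := diff_symBody hK
  refine ⟨le_antisymm (key2 _ hsym) ?_, key2⟩
  obtain ⟨ρ0, hρ0, c0, hc0⟩ := asym_set_nonempty hK
  refine csInf_le_csInf ⟨0, fun a ha => ha.1.le⟩ ⟨ρ0, hρ0, c0, hc0⟩ ?_
  rintro ρ ⟨hρ, c, hc⟩
  obtain ⟨A, x, h1, h2⟩ := bm_wit_of_asym hK.1 hρ hc
  exact ⟨hρ, A, x, h1, h2⟩
end

section
/- In any Minkowski space (R^n with norm induced by a symmetric convex body B as unit ball), every convex body K satisfies R(K) + r(K) ≤ D(K), where R is the circumradius, r the inradius, and D the diameter with respect to the norm. -/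
open Set Pointwise

lemma zero_mem_interior_ball {n : ℕ} {B : Set (V n)} (hB : IsSymUnitBall B) :
    (0 : V n) ∈ interior B := by
  obtain ⟨⟨hconv, hcomp, ⟨b, hb⟩⟩, hsym⟩ := hB
  have hsub : -(interior B) ⊆ interior B := by
    refine interior_maximal ?_ (isOpen_interior.neg)
    intro x hx
    rw [hsym]
    exact Set.neg_subset_neg.2 interior_subset hx
  have hnb : -b ∈ interior B := hsub (Set.neg_mem_neg.2 hb)
  have h := hconv.interior hb hnb (by norm_num : (0:ℝ) ≤ 1/2)
    (by norm_num : (0:ℝ) ≤ 1/2) (by norm_num)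
  simpa [smul_neg] using h

/-- In any Minkowski space, `R(K) + r(K) ≤ D(K)`. -/
theorem stmt2 {n : ℕ} (B K : Set (V n)) (hB : IsSymUnitBall B)
    (hK : IsConvexBody K) :
    circum B K + inrad B K ≤ mdiam B K := by
  classical
  have h0B : (0 : V n) ∈ interior B := zero_mem_interior_ball hB
  obtain ⟨⟨hBconv, hBcomp, hBint⟩, hBsym⟩ := hB
  obtain ⟨hKconv, hKcomp, hKint⟩ := hK
  have hBnhds : B ∈ nhds (0 : V n) := mem_interior_iff_mem_nhds.1 h0B
  have habs : Absorbent ℝ B := absorbent_nhds_zero hBnhds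
  have hBcl : IsClosed B := hBcomp.isClosed
  have hbd : Bornology.IsVonNBounded ℝ B :=
    (NormedSpace.isVonNBounded_iff ℝ).2 hBcomp.isBounded
  have hmem : ∀ z : V n, gauge B z ≤ 1 ↔ z ∈ B := by
    intro z
    rw [gauge_le_one_iff_mem_closure hBconv hBnhds, hBcl.closure_eq]
  have hgpos : ∀ z : V n, z ≠ 0 → 0 < gauge B z := fun z hz =>
    (gauge_pos habs hbd).2 hz
  have hsmulmem : ∀ t : ℝ, 0 < t → ∀ z : V n, (z ∈ t • B ↔ gauge B z ≤ t) := by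
    intro t ht z
    constructor
    · exact fun hz => gauge_le_of_mem ht.le hz
    · intro hz
      have h1 : gauge B (t⁻¹ • z) ≤ 1 := by
        rw [gauge_smul_of_nonneg (inv_nonneg.2 ht.le), smul_eq_mul]
        rw [inv_mul_le_iff₀ ht, mul_one]
        exact hz
      have := (hmem _).1 h1
      have h2 : t • t⁻¹ • z ∈ t • B := smul_mem_smul_set this
      rwa [smul_inv_smul₀ ht.ne'] at h2
  have hKne : K.Nonempty := hKint.mono interior_subset
  obtain ⟨ε, hε, hball⟩ := Metric.mem_nhds_iff.1 hBnhds
  obtain ⟨M, hM⟩ : ∃ M : ℝ, ∀ x ∈ K, ‖x‖ ≤ M :=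
    isBounded_iff_forall_norm_le.1 hKcomp.isBounded
  have hgnorm : ∀ z : V n, gauge B z ≤ ‖z‖ / ε := by
    intro z
    rw [le_div_iff₀ hε]
    have := mul_gauge_le_norm (x := z) hball
    linarith
  have hbdd : BddAbove {d : ℝ | ∃ x ∈ K, ∃ y ∈ K, d = gauge B (x - y)} := by
    refine ⟨(M + M) / ε, ?_⟩
    rintro d ⟨x, hx, y, hy, rfl⟩
    refine (hgnorm _).trans ?_
    have hxy : ‖x - y‖ ≤ M + M := (norm_sub_le _ _).trans (add_le_add (hM x hx) (hM y hy))
    gcongr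
  have hD : ∀ x ∈ K, ∀ y ∈ K, gauge B (x - y) ≤ mdiam B K := by
    intro x hx y hy
    exact le_csSup hbdd ⟨x, hx, y, hy, rfl⟩
  have hDnonneg : 0 ≤ mdiam B K := by
    obtain ⟨x0, hx0⟩ := hKne
    have := hD x0 hx0 x0 hx0
    rw [sub_self, gauge_zero] at this
    exact this
  rcases subsingleton_or_nontrivial (V n) with hss | hnt
  · -- trivial space : circum = inrad = 0
    have hB0 : (0 : V n) ∈ B := interior_subset h0B
    have hcir : circum B K = 0 := by
      unfold circum
      have hset : {ρ : ℝ | 0 < ρ ∧ ∃ c : V n, K ⊆ c +ᵥ ρ • B} = Set.Ioi 0 := by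
        ext ρ
        simp only [Set.mem_setOf_eq, Set.mem_Ioi]
        refine ⟨fun h => h.1, fun h => ⟨h, 0, fun x hx => ?_⟩⟩
        have hx0 : x = (0 : V n) +ᵥ ρ • (0 : V n) := Subsingleton.elim _ _
        rw [hx0]
        exact Set.vadd_mem_vadd_set (smul_mem_smul_set hB0)
      rw [hset, csInf_Ioi]
    have hinr : inrad B K = 0 := by
      unfold inrad
      obtain ⟨x0, hx0⟩ := hKne
      have hset : {ρ : ℝ | 0 < ρ ∧ ∃ c : V n, c +ᵥ ρ • B ⊆ K} = Set.Ioi 0 := by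
        ext ρ
        simp only [Set.mem_setOf_eq, Set.mem_Ioi]
        refine ⟨fun h => h.1, fun h => ⟨h, 0, fun x hx => ?_⟩⟩
        have : x = x0 := Subsingleton.elim _ _
        rw [this]; exact hx0
      rw [hset, Real.sSup_of_not_bddAbove (not_bddAbove_Ioi (0:ℝ))]
    rw [hcir, hinr]
    simpa using hDnonneg
  · -- main case
    have hKey : ∀ r ∈ {ρ : ℝ | 0 < ρ ∧ ∃ c : V n, c +ᵥ ρ • B ⊆ K},
        circum B K ≤ mdiam B K - r := by
      rintro r ⟨hr, c, hc⟩
      obtain ⟨z, hz⟩ := exists_ne (0 : V n)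
      set t0 := gauge B z with ht0
      have ht0pos : 0 < t0 := hgpos z hz
      have hu1 : gauge B (t0⁻¹ • z) = 1 := by
        rw [gauge_smul_of_nonneg (inv_nonneg.2 ht0pos.le), smul_eq_mul, ← ht0,
          inv_mul_cancel₀ ht0pos.ne']
      have huB : t0⁻¹ • z ∈ B := (hmem _).1 hu1.le
      have hunB : -(t0⁻¹ • z) ∈ B := by
        rw [hBsym]; exact Set.neg_mem_neg.2 huB
      have hp1 : c + r • (t0⁻¹ • z) ∈ K :=
        hc (Set.vadd_mem_vadd_set (smul_mem_smul_set huB))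
      have hp2 : c + r • (-(t0⁻¹ • z)) ∈ K :=
        hc (Set.vadd_mem_vadd_set (smul_mem_smul_set hunB))
      have hdiff : (c + r • (t0⁻¹ • z)) - (c + r • (-(t0⁻¹ • z)))
          = (2 * r) • (t0⁻¹ • z) := by
        rw [smul_neg]
        module
      have h2r : 2 * r ≤ mdiam B K := by
        have := hD _ hp1 _ hp2
        rwa [hdiff, gauge_smul_of_nonneg (by positivity : (0:ℝ) ≤ 2 * r), smul_eq_mul,
          hu1, mul_one] at this
      have hrD : r < mdiam B K := by linarith
      have hsub : K ⊆ c +ᵥ (mdiam B K - r) • B := by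
        intro x hx
        have hgx : gauge B (x - c) ≤ mdiam B K - r := by
          rcases eq_or_ne x c with rfl | hxc
          · rw [sub_self, gauge_zero]; linarith
          · set t := gauge B (x - c) with ht
            have htpos : 0 < t := hgpos _ (sub_ne_zero.2 hxc)
            have hu1' : gauge B (t⁻¹ • (x - c)) = 1 := by
              rw [gauge_smul_of_nonneg (inv_nonneg.2 htpos.le), smul_eq_mul, ← ht,
                inv_mul_cancel₀ htpos.ne']
            have huB' : t⁻¹ • (x - c) ∈ B := (hmem _).1 hu1'.le
            have hunB' : -(t⁻¹ • (x - c)) ∈ B := by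
              rw [hBsym]; exact Set.neg_mem_neg.2 huB'
            have hy : c + r • (-(t⁻¹ • (x - c))) ∈ K :=
              hc (Set.vadd_mem_vadd_set (smul_mem_smul_set hunB'))
            have hxc' : x - c = t • (t⁻¹ • (x - c)) := (smul_inv_smul₀ htpos.ne' _).symm
            have hxy : x - (c + r • (-(t⁻¹ • (x - c)))) = (t + r) • (t⁻¹ • (x - c)) := by
              rw [smul_neg, add_smul, ← hxc']
              module
            have := hD x hx _ hy
            rw [hxy, gauge_smul_of_nonneg (by positivity : (0:ℝ) ≤ t + r), smul_eq_mul,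
              hu1', mul_one] at this
            linarith
        rw [Set.mem_vadd_set_iff_neg_vadd_mem, vadd_eq_add, neg_add_eq_sub]
        exact (hsmulmem _ (by linarith) _).2 hgx
      exact csInf_le ⟨0, fun ρ hρ => hρ.1.le⟩ ⟨by linarith, c, hsub⟩
    obtain ⟨x0, hx0⟩ := hKint
    obtain ⟨δ, hδ, hballK⟩ := Metric.mem_nhds_iff.1 (mem_interior_iff_mem_nhds.1 hx0)
    obtain ⟨M0, hM0⟩ : ∃ M0 : ℝ, ∀ b ∈ B, ‖b‖ ≤ M0 :=
      isBounded_iff_forall_norm_le.1 hBcomp.isBounded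
    set M1 : ℝ := max M0 1 with hM1
    have hM1pos : 0 < M1 := lt_of_lt_of_le one_pos (le_max_right _ _)
    set r0 : ℝ := δ / (2 * M1) with hr0def
    have hr0 : 0 < r0 := by positivity
    have hr0mem : r0 ∈ {ρ : ℝ | 0 < ρ ∧ ∃ c : V n, c +ᵥ ρ • B ⊆ K} := by
      refine ⟨hr0, x0, ?_⟩
      intro w hw
      rw [Set.mem_vadd_set_iff_neg_vadd_mem, vadd_eq_add, neg_add_eq_sub] at hw
      obtain ⟨b, hb, hbw⟩ := hw
      apply hballK
      rw [Metric.mem_ball, dist_eq_norm]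
      have h1 : ‖w - x0‖ = r0 * ‖b‖ := by rw [← hbw, norm_smul]; simp [abs_of_pos hr0]
      have h2 : ‖b‖ ≤ M1 := (hM0 b hb).trans (le_max_left _ _)
      have h3 : r0 * M1 = δ / 2 := by
        rw [hr0def]; field_simp
      have h4 : r0 * ‖b‖ ≤ δ / 2 := by
        calc r0 * ‖b‖ ≤ r0 * M1 := by gcongr
        _ = δ / 2 := h3
      rw [h1]; linarith
    have hcir_le : ∀ r ∈ {ρ : ℝ | 0 < ρ ∧ ∃ c : V n, c +ᵥ ρ • B ⊆ K},
        r ≤ mdiam B K - circum B K := by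
      intro r hr
      have := hKey r hr
      linarith
    have h0 : 0 ≤ mdiam B K - circum B K :=
      le_trans hr0.le (hcir_le r0 hr0mem)
    have hfin : inrad B K ≤ mdiam B K - circum B K := Real.sSup_le hcir_le h0
    linarith
end

section
/- In any Minkowski space, if a convex body K satisfies R(K) + r(K) = D(K), then every incenter of K is also a circumcenter of K. -/
open Set Pointwise

section Aux

open Topology

variable {n : ℕ} {B : Set (V n)}

lemma IsSymUnitBall.zero_mem_interior (hB : IsSymUnitBall B) : (0 : V n) ∈ interior B := by
  obtain ⟨⟨hconv, hcomp, ⟨b, hb⟩⟩, hsym⟩ := hB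
  have hconvI : Convex ℝ (interior B) := hconv.interior
  have hnb : -b ∈ interior B := by
    have h1 : -b ∈ (Homeomorph.neg (V n)) '' interior B := ⟨b, hb, rfl⟩
    rw [Homeomorph.image_interior] at h1
    have h2 : (Homeomorph.neg (V n)) '' B = B := by
      ext z
      simp only [Homeomorph.neg, Equiv.neg, Homeomorph.homeomorph_mk_coe,
        Equiv.coe_fn_mk]
      constructor
      · rintro ⟨w, hw, rfl⟩
        rw [hsym]
        exact Set.neg_mem_neg.2 hw
      · intro hz
        refine ⟨-z, ?_, neg_neg z⟩
        rw [hsym]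
        exact Set.neg_mem_neg.2 hz
    rwa [h2] at h1
  have h0 : (0 : V n) = (1/2 : ℝ) • b + (1/2 : ℝ) • (-b) := by
    rw [smul_neg, add_neg_cancel]
  rw [h0]
  exact hconvI hb hnb (by norm_num) (by norm_num) (by norm_num)

lemma IsSymUnitBall.symm_mem (hB : IsSymUnitBall B) : ∀ x ∈ B, -x ∈ B := by
  intro x hx
  have : x ∈ -B := hB.2 ▸ hx
  simpa using Set.mem_neg.1 this

lemma IsSymUnitBall.absorbent (hB : IsSymUnitBall B) : Absorbent ℝ B :=
  absorbent_nhds_zero (mem_interior_iff_mem_nhds.1 hB.zero_mem_interior)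

lemma IsSymUnitBall.vonN (hB : IsSymUnitBall B) : Bornology.IsVonNBounded ℝ B :=
  NormedSpace.isVonNBounded_iff ℝ |>.2 hB.1.2.1.isBounded

/-- Membership in a nonnegative dilate from a gauge bound. -/
lemma IsSymUnitBall.mem_smul_of_gauge_le (hB : IsSymUnitBall B) {ρ : ℝ} {w : V n}
    (hρ : 0 ≤ ρ) (hw : gauge B w ≤ ρ) : w ∈ ρ • B := by
  have h0B : (0 : V n) ∈ B := interior_subset hB.zero_mem_interior
  rcases eq_or_lt_of_le hρ with h | h
  · have hg0 : gauge B w = 0 := le_antisymm (h ▸ hw) (gauge_nonneg w)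
    have hw0 : w = 0 := (gauge_eq_zero hB.absorbent hB.vonN).1 hg0
    rw [← h, hw0]
    rw [zero_smul_set ⟨0, h0B⟩]
    exact rfl
  · rw [mem_smul_set_iff_inv_smul_mem₀ (ne_of_gt h)]
    have hBn : B ∈ 𝓝 (0 : V n) := mem_interior_iff_mem_nhds.1 hB.zero_mem_interior
    rw [← (hB.1.2.1.isClosed.closure_eq), ← gauge_le_one_iff_mem_closure hB.1.1 hBn]
    rw [gauge_smul_of_nonneg (by positivity)]
    rw [smul_eq_mul]
    rw [inv_mul_le_iff₀ h, mul_one]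
    exact hw

end Aux

/-- If `R(K) + r(K) = D(K)`, every incenter of `K` is also a circumcenter. -/
theorem stmt3 {n : ℕ} (B K : Set (V n)) (hB : IsSymUnitBall B)
    (hK : IsConvexBody K)
    (heq : circum B K + inrad B K = mdiam B K) :
    ∀ c : V n, c +ᵥ inrad B K • B ⊆ K → K ⊆ c +ᵥ circum B K • B := by
  intro c hc x hx
  set R := circum B K with hR
  set r := inrad B K with hr
  set D := mdiam B K with hD
  have hR0 : 0 ≤ R := Real.sInf_nonneg fun ρ hρ => hρ.1.le
  have hr0 : 0 ≤ r := Real.sSup_nonneg fun ρ hρ => hρ.1.le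
  -- the gauge is bounded by a multiple of the norm
  obtain ⟨ε, hε, hεB⟩ := Metric.mem_nhds_iff.1
    (mem_interior_iff_mem_nhds.1 hB.zero_mem_interior)
  have hgauge_bound : ∀ z : V n, gauge B z ≤ ‖z‖ / ε := by
    intro z
    have habs : Absorbent ℝ (Metric.ball (0 : V n) ε) :=
      absorbent_nhds_zero (Metric.ball_mem_nhds 0 hε)
    have := gauge_mono habs hεB z
    rwa [gauge_ball hε.le] at this
  -- K is norm-bounded
  obtain ⟨C, hC⟩ := isBounded_iff_forall_norm_le.1 hK.2.1.isBounded
  -- the diameter set is bounded above and D is an upper bound for gauge distances in K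
  have hDub : ∀ a ∈ K, ∀ b ∈ K, gauge B (a - b) ≤ D := by
    intro a ha b hb
    apply le_csSup
    · refine ⟨2 * C / ε, ?_⟩
      rintro d ⟨p, hp, q, hq, rfl⟩
      refine (hgauge_bound _).trans ?_
      have h2C : ‖p - q‖ ≤ 2 * C := by
        calc ‖p - q‖ ≤ ‖p‖ + ‖q‖ := norm_sub_le _ _
        _ ≤ C + C := add_le_add (hC p hp) (hC q hq)
        _ = 2 * C := by ring
      gcongr
    · exact ⟨a, ha, b, hb, rfl⟩
  set u := x - c with hu
  set t := gauge B u with ht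
  have ht0 : 0 ≤ t := gauge_nonneg u
  -- key claim : t ≤ R
  have hkey : t ≤ R := by
    rcases eq_or_lt_of_le ht0 with h0 | h0
    · rw [← h0]; exact hR0
    · -- y = c - (r/t) • u ∈ K
      have hrt : (0:ℝ) ≤ r / t := div_nonneg hr0 ht0
      have hvmem : -((r / t) • u) ∈ r • B := by
        apply hB.mem_smul_of_gauge_le hr0
        rw [gauge_neg hB.symm_mem, gauge_smul_of_nonneg hrt, smul_eq_mul, ← ht]
        exact le_of_eq (by field_simp)
      have hy : c + -((r / t) • u) ∈ K := by
        apply hc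
        rw [Set.mem_vadd_set_iff_neg_vadd_mem]
        simpa using hvmem
      have hxy : x - (c + -((r / t) • u)) = (1 + r / t) • u := by
        simp only [hu, add_smul, one_smul]
        module
      have hgauge_xy : gauge B (x - (c + -((r / t) • u))) = t + r := by
        rw [hxy, gauge_smul_of_nonneg (by positivity), smul_eq_mul, ← ht]
        field_simp
      have hle : t + r ≤ D := hgauge_xy ▸ hDub x hx _ hy
      linarith [heq]
  -- conclude
  rw [Set.mem_vadd_set_iff_neg_vadd_mem]
  have : -c +ᵥ x = u := by simp [hu, sub_eq_neg_add]
  rw [this]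
  exact hB.mem_smul_of_gauge_le hR0 hkey
end

section
/- In any Minkowski space, every complete convex body K satisfies j(K) = s(K)/(s(K)+1), where j(K) = R(K)/D(K) is the Jung ratio and s(K) the Minkowski asymmetry. In particular the Jung constant of the space equals s_max/(s_max+1), where s_max is the maximal Minkowski asymmetry over complete bodies. -/
open Set Pointwise

namespace S4

variable {n : ℕ} {B : Set (V n)}

theorem zero_mem_int (hB : IsSymUnitBall B) : (0 : V n) ∈ interior B := by
  obtain ⟨⟨hc, hcp, x, hx⟩, hsym⟩ := hB
  have hx' : -x ∈ interior B := by
    rw [hsym]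
    exact interior_maximal (Set.neg_subset_neg.mpr interior_subset) isOpen_interior.neg
      (Set.neg_mem_neg.mpr hx)
  have h0 : (0 : V n) ∈ segment ℝ x (-x) :=
    ⟨1/2, 1/2, by norm_num, by norm_num, by norm_num, by module⟩
  exact hc.interior.segment_subset hx hx' h0

theorem B_nhds (hB : IsSymUnitBall B) : B ∈ nhds (0 : V n) :=
  mem_nhds_iff.mpr ⟨interior B, interior_subset, isOpen_interior, zero_mem_int hB⟩

theorem habs (hB : IsSymUnitBall B) : Absorbent ℝ B := absorbent_nhds_zero (B_nhds hB)

theorem hBvb (hB : IsSymUnitBall B) : Bornology.IsVonNBounded ℝ B := by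
  rw [NormedSpace.isVonNBounded_iff]; exact hB.1.2.1.isBounded

theorem gauge_sym (hB : IsSymUnitBall B) (x : V n) : gauge B (-x) = gauge B x := by
  refine gauge_neg (fun y hy => ?_) x
  rw [hB.2]; exact Set.neg_mem_neg.mpr hy

theorem gauge_tri (hB : IsSymUnitBall B) (x y : V n) :
    gauge B (x + y) ≤ gauge B x + gauge B y := gauge_add_le hB.1.1 (habs hB) x y

theorem gauge_smul' (hB : IsSymUnitBall B) {a : ℝ} (ha : 0 ≤ a) (x : V n) :
    gauge B (a • x) = a * gauge B x := by
  rw [gauge_smul_of_nonneg ha, smul_eq_mul]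

theorem gauge_eq_zero' (hB : IsSymUnitBall B) {x : V n} : gauge B x = 0 ↔ x = 0 :=
  gauge_eq_zero (habs hB) (hBvb hB)

theorem gauge_zero'' (hB : IsSymUnitBall B) : gauge B (0 : V n) = 0 := gauge_zero

theorem mem_iff_gauge_le_one (hB : IsSymUnitBall B) {x : V n} :
    x ∈ B ↔ gauge B x ≤ 1 := by
  rw [gauge_le_one_iff_mem_closure hB.1.1 (B_nhds hB), hB.1.2.1.isClosed.closure_eq]

theorem mem_smul_iff (hB : IsSymUnitBall B) {t : ℝ} (ht : 0 < t) {x : V n} :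
    x ∈ t • B ↔ gauge B x ≤ t := by
  constructor
  · intro h; exact gauge_le_of_mem ht.le h
  · intro h
    have : t⁻¹ • x ∈ B := by
      rw [mem_iff_gauge_le_one hB, gauge_smul' hB (by positivity)]
      rw [inv_mul_le_iff₀ ht]; simpa using h
    have := smul_mem_smul_set (a := t) this
    rwa [smul_inv_smul₀ ht.ne'] at this

theorem mem_vadd_smul_iff (hB : IsSymUnitBall B) {t : ℝ} (ht : 0 < t) {x c : V n} :
    x ∈ c +ᵥ t • B ↔ gauge B (x - c) ≤ t := by
  rw [Set.mem_vadd_set_iff_neg_vadd_mem]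
  have : -c +ᵥ x = x - c := by simp [vadd_eq_add, sub_eq_neg_add]
  rw [this, mem_smul_iff hB ht]

end S4

namespace S4

variable {n : ℕ} {B : Set (V n)}

theorem exists_small_ball (hB : IsSymUnitBall B) :
    ∃ m : ℝ, 0 < m ∧ Metric.closedBall (0 : V n) m ⊆ B := by
  obtain ⟨ε, hε, h⟩ := Metric.mem_nhds_iff.mp (B_nhds hB)
  exact ⟨ε/2, by positivity, (Metric.closedBall_subset_ball (by linarith)).trans h⟩

theorem gauge_le_norm_div (hB : IsSymUnitBall B) :
    ∃ m : ℝ, 0 < m ∧ ∀ x : V n, gauge B x ≤ ‖x‖ / m := by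
  obtain ⟨m, hm, hsub⟩ := exists_small_ball hB
  refine ⟨m, hm, fun x => ?_⟩
  have habs' : Absorbent ℝ (Metric.closedBall (0 : V n) m) :=
    absorbent_nhds_zero (Metric.closedBall_mem_nhds _ hm)
  have := gauge_mono habs' hsub x
  rwa [gauge_closedBall hm.le] at this

theorem subset_vadd_smul_iff (hB : IsSymUnitBall B) {t : ℝ} (ht : 0 < t) {K : Set (V n)}
    {c : V n} : K ⊆ c +ᵥ t • B ↔ ∀ x ∈ K, gauge B (x - c) ≤ t := by
  constructor
  · intro h x hx; exact (mem_vadd_smul_iff hB ht).mp (h hx)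
  · intro h x hx; exact (mem_vadd_smul_iff hB ht).mpr (h x hx)

theorem dset_bddAbove (hB : IsSymUnitBall B) {K : Set (V n)} (hK : Bornology.IsBounded K) :
    BddAbove {d : ℝ | ∃ x ∈ K, ∃ y ∈ K, d = gauge B (x - y)} := by
  obtain ⟨m, hm, hg⟩ := gauge_le_norm_div hB
  obtain ⟨C, hC⟩ := hK.exists_norm_le
  refine ⟨2 * C / m, fun d hd => ?_⟩
  obtain ⟨x, hx, y, hy, rfl⟩ := hd
  refine (hg _).trans ?_
  have : ‖x - y‖ ≤ 2 * C := by
    calc ‖x - y‖ ≤ ‖x‖ + ‖y‖ := norm_sub_le x y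
    _ ≤ 2 * C := by have := hC x hx; have := hC y hy; linarith
  exact by gcongr

theorem pair_le_mdiam (hB : IsSymUnitBall B) {K : Set (V n)} (hK : Bornology.IsBounded K)
    {x y : V n} (hx : x ∈ K) (hy : y ∈ K) : gauge B (x - y) ≤ mdiam B K :=
  le_csSup (dset_bddAbove hB hK) ⟨x, hx, y, hy, rfl⟩

theorem mdiam_nonneg {K : Set (V n)} : 0 ≤ mdiam B K :=
  Real.sSup_nonneg (fun d hd => by obtain ⟨x, _, y, _, rfl⟩ := hd; exact gauge_nonneg _)

theorem mdiam_le {K : Set (V n)} {a : ℝ} (ha : 0 ≤ a)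
    (h : ∀ x ∈ K, ∀ y ∈ K, gauge B (x - y) ≤ a) : mdiam B K ≤ a :=
  Real.sSup_le (fun d hd => by obtain ⟨x, hx, y, hy, rfl⟩ := hd; exact h x hx y hy) ha

theorem mdiam_mono (hB : IsSymUnitBall B) {K L : Set (V n)} (hKL : K ⊆ L)
    (hL : Bornology.IsBounded L) (hK : K.Nonempty) : mdiam B K ≤ mdiam B L := by
  obtain ⟨x0, hx0⟩ := hK
  refine csSup_le_csSup (dset_bddAbove hB hL) ⟨0, x0, hx0, x0, hx0, by simp⟩ ?_
  rintro d ⟨x, hx, y, hy, rfl⟩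
  exact ⟨x, hKL hx, y, hKL hy, rfl⟩

theorem Cset_bddBelow {K : Set (V n)} :
    BddBelow {ρ : ℝ | 0 < ρ ∧ ∃ c : V n, K ⊆ c +ᵥ ρ • B} :=
  ⟨0, fun ρ hρ => hρ.1.le⟩

theorem circum_le {K : Set (V n)} {ρ : ℝ} (hρ : 0 < ρ) {c : V n} (h : K ⊆ c +ᵥ ρ • B) :
    circum B K ≤ ρ := csInf_le Cset_bddBelow ⟨hρ, c, h⟩

theorem Cset_nonempty (hB : IsSymUnitBall B) {K : Set (V n)}
    (hK : Bornology.IsBounded K) :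
    {ρ : ℝ | 0 < ρ ∧ ∃ c : V n, K ⊆ c +ᵥ ρ • B}.Nonempty := by
  obtain ⟨m, hm, hg⟩ := gauge_le_norm_div hB
  obtain ⟨C, hC⟩ := hK.exists_norm_le
  refine ⟨2 * |C| / m + 1, by positivity, 0, (subset_vadd_smul_iff hB (by positivity)).mpr ?_⟩
  intro x hx
  refine (hg _).trans ?_
  have h1 : ‖x - 0‖ ≤ 2 * |C| := by
    have := hC x hx
    have := le_abs_self C
    have := abs_nonneg C
    simp only [sub_zero]
    linarith
  calc ‖x - 0‖ / m ≤ 2 * |C| / m := by gcongr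
  _ ≤ 2 * |C| / m + 1 := by linarith

theorem circum_nonneg {K : Set (V n)} : 0 ≤ circum B K :=
  Real.sInf_nonneg (fun ρ hρ => hρ.1.le)

end S4

namespace S4

variable {n : ℕ} {B : Set (V n)}

theorem exists_unit (hB : IsSymUnitBall B) [Nontrivial (V n)] :
    ∃ u : V n, u ∈ B ∧ gauge B u = 1 := by
  obtain ⟨x, hx⟩ := exists_ne (0 : V n)
  have hg : 0 < gauge B x := by
    rcases (gauge_nonneg x).lt_or_eq with h | h
    · exact h
    · exact absurd ((gauge_eq_zero' hB).mp h.symm) hx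
  refine ⟨(gauge B x)⁻¹ • x, ?_, ?_⟩
  · rw [mem_iff_gauge_le_one hB, gauge_smul' hB (by positivity), inv_mul_cancel₀ hg.ne']
  · rw [gauge_smul' hB (by positivity), inv_mul_cancel₀ hg.ne']

theorem neg_mem_B (hB : IsSymUnitBall B) {b : V n} (hb : b ∈ B) : -b ∈ B := by
  rw [hB.2]; exact Set.neg_mem_neg.mpr hb

theorem inball_of_body (hB : IsSymUnitBall B) {K : Set (V n)} (hK : IsConvexBody K) :
    ∃ ρ0 : ℝ, 0 < ρ0 ∧ ∃ c0 : V n, c0 +ᵥ ρ0 • B ⊆ K := by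
  obtain ⟨c0, hc0⟩ := hK.2.2
  obtain ⟨δ, hδ, hball⟩ := Metric.mem_nhds_iff.mp (mem_interior_iff_mem_nhds.mp hc0)
  obtain ⟨M', hM'⟩ := hB.1.2.1.isBounded.exists_norm_le
  set M : ℝ := max M' 1 with hMdef
  have hM : ∀ b ∈ B, ‖b‖ ≤ M := fun b hb => (hM' b hb).trans (le_max_left _ _)
  have hM0 : (0 : ℝ) < M := lt_of_lt_of_le one_pos (le_max_right _ _)
  refine ⟨δ / 2 / M, by positivity, c0, ?_⟩
  intro x hx
  rw [Set.mem_vadd_set_iff_neg_vadd_mem] at hx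
  obtain ⟨b, hb, hxb⟩ := hx
  apply hball
  have : ‖x - c0‖ ≤ δ / 2 := by
    have hx' : x - c0 = (δ / 2 / M) • b := by
      have := hxb
      simp only [vadd_eq_add] at this
      rw [this, ← sub_eq_neg_add]
    rw [hx', norm_smul, Real.norm_eq_abs, abs_of_pos (show (0:ℝ) < δ / 2 / M by positivity)]
    calc δ / 2 / M * ‖b‖ ≤ δ / 2 / M * M := by gcongr; exact hM b hb
    _ = δ / 2 := by field_simp
  exact mem_ball_iff_norm.mpr (lt_of_le_of_lt this (by linarith))


end S4

namespace S4

variable {n : ℕ} {B : Set (V n)}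

theorem complete_core (hB : IsSymUnitBall B) [Nontrivial (V n)] {K : Set (V n)}
    (hK : IsCompleteBody B K) :
    asym K = circum B K / (mdiam B K - circum B K) ∧
    0 < circum B K ∧ circum B K < mdiam B K := by
  obtain ⟨hKbody, hKcomp⟩ := hK
  have Kb : Bornology.IsBounded K := hKbody.2.1.isBounded
  set D := mdiam B K with hD
  set R := circum B K with hR
  obtain ⟨u, huB, hu1⟩ := exists_unit hB
  obtain ⟨ρ0, hρ0, c0, hin⟩ := inball_of_body hB hKbody
  -- the two inball points
  have hp : c0 + ρ0 • u ∈ K := by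
    apply hin
    rw [mem_vadd_smul_iff hB hρ0]
    have : c0 + ρ0 • u - c0 = ρ0 • u := by abel
    rw [this, gauge_smul' hB hρ0.le, hu1, mul_one]
  have hq : c0 - ρ0 • u ∈ K := by
    apply hin
    rw [mem_vadd_smul_iff hB hρ0]
    have : c0 - ρ0 • u - c0 = -(ρ0 • u) := by abel
    rw [this, gauge_sym hB, gauge_smul' hB hρ0.le, hu1, mul_one]
  have hpq : gauge B ((c0 + ρ0 • u) - (c0 - ρ0 • u)) = 2 * ρ0 := by
    have : (c0 + ρ0 • u) - (c0 - ρ0 • u) = (2 * ρ0) • u := by module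
    rw [this, gauge_smul' hB (by positivity), hu1, mul_one]
  have h2ρ0D : 2 * ρ0 ≤ D := hpq ▸ pair_le_mdiam hB Kb hp hq
  have hD0 : 0 < D := lt_of_lt_of_le (by positivity) h2ρ0D
  -- circumradius lower bound
  have hρ0R : ρ0 ≤ R := by
    apply le_csInf (Cset_nonempty hB Kb)
    rintro ρ ⟨hρpos, c, hsub⟩
    rw [subset_vadd_smul_iff hB hρpos] at hsub
    have g1 := hsub _ hp
    have g2 := hsub _ hq
    have : gauge B ((c0 + ρ0 • u) - (c0 - ρ0 • u)) ≤ 2 * ρ := by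
      have hsplit : (c0 + ρ0 • u) - (c0 - ρ0 • u)
          = ((c0 + ρ0 • u) - c) + -((c0 - ρ0 • u) - c) := by abel
      rw [hsplit]
      calc gauge B _ ≤ gauge B ((c0 + ρ0 • u) - c) + gauge B (-((c0 - ρ0 • u) - c)) :=
            gauge_tri hB _ _
      _ ≤ ρ + ρ := by rw [gauge_sym hB]; exact add_le_add g1 g2
      _ = 2 * ρ := by ring
    rw [hpq] at this; linarith
  have hRpos : 0 < R := lt_of_lt_of_le hρ0 hρ0R
  -- circumradius upper bound R ≤ D - ρ0
  have hRle : R ≤ D - ρ0 := by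
    have hDρ0 : 0 < D - ρ0 := by linarith
    apply circum_le hDρ0
    rw [subset_vadd_smul_iff hB hDρ0]
    intro x hx
    rcases eq_or_ne (x - c0) 0 with h0 | h0
    · rw [h0, gauge_zero]; linarith
    · set g := gauge B (x - c0) with hg
      have hgpos : 0 < g := by
        rcases (gauge_nonneg (x - c0)).lt_or_eq with h | h
        · exact h
        · exact absurd ((gauge_eq_zero' hB).mp h.symm) h0
      set u' := g⁻¹ • (x - c0) with hu'
      have hgu' : gauge B u' = 1 := by
        rw [hu', gauge_smul' hB (by positivity), ← hg, inv_mul_cancel₀ hgpos.ne']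
      have hu'B : u' ∈ B := (mem_iff_gauge_le_one hB).mpr hgu'.le
      have hy : c0 - ρ0 • u' ∈ K := by
        apply hin
        rw [mem_vadd_smul_iff hB hρ0]
        have : c0 - ρ0 • u' - c0 = -(ρ0 • u') := by abel
        rw [this, gauge_sym hB, gauge_smul' hB hρ0.le, hgu', mul_one]
      have hxy : gauge B (x - (c0 - ρ0 • u')) = g + ρ0 := by
        have hx0 : x - c0 = g • u' := by
          rw [hu', smul_smul, mul_inv_cancel₀ hgpos.ne', one_smul]
        have : x - (c0 - ρ0 • u') = (g + ρ0) • u' := by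
          rw [add_smul, ← hx0]; abel
        rw [this, gauge_smul' hB (by positivity), hgu', mul_one]
      have := pair_le_mdiam hB Kb hx hy
      rw [hxy] at this; linarith
  have hRD : R < D := by linarith
  -- spherical intersection property
  have sph : ∀ (ρ : ℝ) (c : V n), 0 < ρ → ρ < D → K ⊆ c +ᵥ ρ • B →
      c +ᵥ (D - ρ) • B ⊆ K := by
    intro ρ c hρpos hρD hsub z hz
    by_contra hzK
    have hlt := hKcomp z hzK
    have hzb : gauge B (z - c) ≤ D - ρ := (mem_vadd_smul_iff hB (by linarith)).mp hz
    rw [subset_vadd_smul_iff hB hρpos] at hsub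
    have hbound : mdiam B (K ∪ {z}) ≤ D := by
      apply mdiam_le hD0.le
      intro x hx y hy
      have key : ∀ w ∈ K, gauge B (w - z) ≤ D := by
        intro w hw
        have hsplit : w - z = (w - c) + -(z - c) := by abel
        rw [hsplit]
        calc gauge B _ ≤ gauge B (w - c) + gauge B (-(z - c)) := gauge_tri hB _ _
        _ ≤ ρ + (D - ρ) := by rw [gauge_sym hB]; exact add_le_add (hsub w hw) hzb
        _ = D := by ring
      rcases hx with hx | hx
      · rcases hy with hy | hy
        · exact pair_le_mdiam hB Kb hx hy
        · rw [Set.mem_singleton_iff] at hy; subst hy; exact key x hx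
      · rw [Set.mem_singleton_iff] at hx; subst hx
        rcases hy with hy | hy
        · rw [← gauge_sym hB, neg_sub]; exact key y hy
        · rw [Set.mem_singleton_iff] at hy; subst hy; simp [gauge_zero]; exact hD0.le
    linarith
  -- membership in the asymmetry set
  have hAmem : ∀ (ρ : ℝ) (c : V n), 0 < ρ → ρ < D → K ⊆ c +ᵥ ρ • B →
      ρ / (D - ρ) ∈ {ρ' : ℝ | 0 < ρ' ∧ ∃ c' : V n, -K ⊆ c' +ᵥ ρ' • K} := by
    intro ρ c hρpos hρD hsub
    have hDρ : 0 < D - ρ := by linarith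
    set s := ρ / (D - ρ) with hs
    refine ⟨by positivity, -((s + 1) • c), ?_⟩
    intro w hw
    rw [Set.mem_neg] at hw
    obtain ⟨b, hb, hbx⟩ := (Set.mem_vadd_set_iff_neg_vadd_mem).mp (hsub hw)
    simp only [vadd_eq_add] at hbx
    -- hbx : ρ • b = -c + (-w)
    have hkmem : c + (D - ρ) • (-b) ∈ K := by
      apply sph ρ c hρpos hρD hsub
      rw [mem_vadd_smul_iff hB hDρ]
      have : c + (D - ρ) • (-b) - c = (D - ρ) • (-b) := by abel
      rw [this, gauge_smul' hB hDρ.le, gauge_sym hB]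
      calc (D - ρ) * gauge B b ≤ (D - ρ) * 1 := by
            have := gauge_le_one_of_mem hb; gcongr
      _ = D - ρ := mul_one _
    rw [Set.mem_vadd_set_iff_neg_vadd_mem]
    refine ⟨c + (D - ρ) • (-b), hkmem, ?_⟩
    simp only [vadd_eq_add]
    have hsc : s * (D - ρ) = ρ := div_mul_cancel₀ _ hDρ.ne'
    have expand : s • (c + (D - ρ) • (-b)) = s • c + (s * (D - ρ)) • (-b) := by
      rw [smul_add, smul_smul]
    rw [expand, hsc]
    -- goal : s • c + ρ • (-b) = -(-((s+1) • c)) + w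
    have hw' : -w = c + ρ • b := by
      have : ρ • b = -c + -w := hbx
      rw [this]; abel
    have hwx : w = -c - ρ • b := by
      have := hw'
      have : w = -(c + ρ • b) := by rw [← hw']; abel
      rw [this]; abel
    rw [hwx]
    module
  -- asym set is nonempty
  obtain ⟨ρ1, hρ1mem, hρ1D⟩ := exists_lt_of_csInf_lt (Cset_nonempty hB Kb) (show R < D from hRD)
  obtain ⟨hρ1pos, c1, hc1⟩ := hρ1mem
  have hAne : {ρ' : ℝ | 0 < ρ' ∧ ∃ c' : V n, -K ⊆ c' +ᵥ ρ' • K}.Nonempty :=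
    ⟨_, hAmem ρ1 c1 hρ1pos hρ1D hc1⟩
  have hDR : 0 < D - R := by linarith
  constructor
  · apply le_antisymm
    · -- asym ≤ R / (D - R)
      apply le_of_forall_gt_imp_ge_of_dense
      intro η hη
      have hη0 : 0 < η := lt_of_le_of_lt (by positivity) hη
      have hnum : 0 < η * (D - R) - R := by
        rw [div_lt_iff₀ hDR] at hη; linarith
      set ε := min ((D - R) / 2) ((η * (D - R) - R) / (1 + η)) with hε
      have hεpos : 0 < ε := lt_min (by positivity) (by positivity)
      obtain ⟨ρ, hρmem, hρlt⟩ := exists_lt_of_csInf_lt (Cset_nonempty hB Kb)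
        (show R < R + ε by linarith)
      obtain ⟨hρpos, c, hc⟩ := hρmem
      have hε1 : ε ≤ (D - R) / 2 := min_le_left _ _
      have hε2 : ε ≤ (η * (D - R) - R) / (1 + η) := min_le_right _ _
      have hρD : ρ < D := by linarith
      have step1 : asym K ≤ ρ / (D - ρ) := csInf_le ⟨0, fun a ha => ha.1.le⟩
        (hAmem ρ c hρpos hρD hc)
      have hDρε : 0 < D - R - ε := by linarith
      have step2 : ρ / (D - ρ) ≤ (R + ε) / (D - R - ε) := by
        apply div_le_div₀ (by positivity) hρlt.le hDρε
        linarith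
      have step3 : (R + ε) / (D - R - ε) ≤ η := by
        rw [div_le_iff₀ hDρε]
        have := (le_div_iff₀ (show (0:ℝ) < 1 + η by linarith)).mp hε2
        nlinarith
      linarith
    · -- R / (D - R) ≤ asym
      apply le_csInf hAne
      rintro ρ ⟨hρpos, c, hsub⟩
      have h1ρ : (0:ℝ) < 1 + ρ := by linarith
      have hm : ((1 + ρ):ℝ) • ((-(1 + ρ)⁻¹) • c) = -c := by
        rw [smul_smul, show ((1 + ρ):ℝ) * (-(1 + ρ)⁻¹) = -1 by field_simp, neg_one_smul]
      have hKsub : K ⊆ ((-(1 + ρ)⁻¹) • c) +ᵥ (ρ * D / (1 + ρ)) • B := by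
        rw [subset_vadd_smul_iff hB (by positivity)]
        intro x hx
        obtain ⟨k, hk, hkx⟩ := (Set.mem_vadd_set_iff_neg_vadd_mem).mp
          (hsub (Set.neg_mem_neg.mpr hx))
        simp only [vadd_eq_add] at hkx
        -- hkx : ρ • k = -c + -x
        have key : ((1 + ρ):ℝ) • (x - (-(1 + ρ)⁻¹) • c) = ρ • (x - k) := by
          rw [smul_sub, smul_sub, hm]
          have : ρ • k = -c - x := by rw [hkx]; abel
          rw [this]; module
        have hgk : gauge B (x - k) ≤ D := pair_le_mdiam hB Kb hx hk
        have hg1 : ((1 + ρ):ℝ) * gauge B (x - (-(1 + ρ)⁻¹) • c) = ρ * gauge B (x - k) := by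
          rw [← gauge_smul' hB h1ρ.le, key, gauge_smul' hB hρpos.le]
        have : ((1 + ρ):ℝ) * gauge B (x - (-(1 + ρ)⁻¹) • c) ≤ ρ * D := by
          rw [hg1]; gcongr
        rw [mul_comm, ← le_div_iff₀ h1ρ] at this
        exact this
      have hRρ : R ≤ ρ * D / (1 + ρ) := circum_le (by positivity) hKsub
      rw [le_div_iff₀ h1ρ] at hRρ
      rw [div_le_iff₀ hDR]
      nlinarith
  · exact ⟨hRpos, hRD⟩

end S4

namespace S4

variable {n : ℕ} {B : Set (V n)}

theorem gauge_finset_sum_le (hB : IsSymUnitBall B) {ι : Type*} (s : Finset ι) (f : ι → V n) :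
    gauge B (∑ i ∈ s, f i) ≤ ∑ i ∈ s, gauge B (f i) := by
  classical
  induction s using Finset.cons_induction with
  | empty => simp [gauge_zero]
  | cons a s ha ih =>
    rw [Finset.sum_cons, Finset.sum_cons]
    exact (gauge_tri hB _ _).trans (by gcongr)

theorem mdiam_closure_le (hB : IsSymUnitBall B) {S : Set (V n)}
    (hS : Bornology.IsBounded S) : mdiam B (closure S) ≤ mdiam B S := by
  apply mdiam_le mdiam_nonneg
  intro x hx y hy
  have hC : IsClosed {p : V n × V n | gauge B (p.1 - p.2) ≤ mdiam B S} := by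
    have hcont : Continuous fun p : V n × V n => gauge B (p.1 - p.2) :=
      (continuous_gauge hB.1.1 (B_nhds hB)).comp (continuous_fst.sub continuous_snd)
    exact isClosed_le hcont continuous_const
  have hsub : S ×ˢ S ⊆ {p : V n × V n | gauge B (p.1 - p.2) ≤ mdiam B S} := by
    rintro ⟨a, b⟩ ⟨ha, hb⟩
    exact pair_le_mdiam hB hS ha hb
  have : closure S ×ˢ closure S ⊆ {p : V n × V n | gauge B (p.1 - p.2) ≤ mdiam B S} := by
    rw [← closure_prod_eq]
    exact closure_minimal hsub hC
  exact this (Set.mk_mem_prod hx hy)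

theorem convexOn_gauge_sub_right (hB : IsSymUnitBall B) (y : V n) :
    ConvexOn ℝ Set.univ (fun z : V n => gauge B (z - y)) := by
  refine ⟨convex_univ, ?_⟩
  intro z1 _ z2 _ a b ha hb hab
  have key : a • z1 + b • z2 - y = a • (z1 - y) + b • (z2 - y) + ((a + b) - 1) • y := by
    module
  simp only []
  rw [key, hab, sub_self, zero_smul, add_zero, smul_eq_mul, smul_eq_mul]
  calc gauge B (a • (z1 - y) + b • (z2 - y))
      ≤ gauge B (a • (z1 - y)) + gauge B (b • (z2 - y)) := gauge_tri hB _ _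
  _ = a * gauge B (z1 - y) + b * gauge B (z2 - y) := by
      rw [gauge_smul' hB ha, gauge_smul' hB hb]


theorem convexOn_gauge_sub_left (hB : IsSymUnitBall B) (x : V n) :
    ConvexOn ℝ Set.univ (fun z : V n => gauge B (x - z)) := by
  refine ⟨convex_univ, ?_⟩
  intro z1 _ z2 _ a b ha hb hab
  have key : x - (a • z1 + b • z2) = a • (x - z1) + b • (x - z2) + (1 - (a + b)) • x := by
    module
  simp only []
  rw [key, hab, sub_self, zero_smul, add_zero, smul_eq_mul, smul_eq_mul]
  calc gauge B (a • (x - z1) + b • (x - z2))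
      ≤ gauge B (a • (x - z1)) + gauge B (b • (x - z2)) := gauge_tri hB _ _
  _ = a * gauge B (x - z1) + b * gauge B (x - z2) := by
      rw [gauge_smul' hB ha, gauge_smul' hB hb]

theorem mdiam_convexHull_le (hB : IsSymUnitBall B) {S : Set (V n)}
    (hS : Bornology.IsBounded S) : mdiam B (convexHull ℝ S) ≤ mdiam B S := by
  apply mdiam_le mdiam_nonneg
  intro x hx y hy
  obtain ⟨x', hx', hxx'⟩ := (convexOn_gauge_sub_right hB y).exists_ge_of_mem_convexHull
    (subset_univ S) hx
  obtain ⟨y', hy', hyy'⟩ := (convexOn_gauge_sub_left hB x').exists_ge_of_mem_convexHull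
    (subset_univ S) hy
  exact hxx'.trans (hyy'.trans (pair_le_mdiam hB hS hx' hy'))

theorem circum_mono (hB : IsSymUnitBall B) {K L : Set (V n)} (hKL : K ⊆ L)
    (hL : Bornology.IsBounded L) : circum B K ≤ circum B L := by
  apply csInf_le_csInf Cset_bddBelow (Cset_nonempty hB hL)
  rintro ρ ⟨hρ, c, hc⟩
  exact ⟨hρ, c, hKL.trans hc⟩

theorem mdiam_pos (hB : IsSymUnitBall B) [Nontrivial (V n)] {K : Set (V n)}
    (hK : IsConvexBody K) : 0 < mdiam B K := by
  obtain ⟨u, huB, hu1⟩ := exists_unit hB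
  obtain ⟨ρ0, hρ0, c0, hin⟩ := inball_of_body hB hK
  have Kb : Bornology.IsBounded K := hK.2.1.isBounded
  have hp : c0 + ρ0 • u ∈ K := by
    apply hin
    rw [mem_vadd_smul_iff hB hρ0]
    have : c0 + ρ0 • u - c0 = ρ0 • u := by abel
    rw [this, gauge_smul' hB hρ0.le, hu1, mul_one]
  have hq : c0 - ρ0 • u ∈ K := by
    apply hin
    rw [mem_vadd_smul_iff hB hρ0]
    have : c0 - ρ0 • u - c0 = -(ρ0 • u) := by abel
    rw [this, gauge_sym hB, gauge_smul' hB hρ0.le, hu1, mul_one]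
  have hpq : gauge B ((c0 + ρ0 • u) - (c0 - ρ0 • u)) = 2 * ρ0 := by
    have : (c0 + ρ0 • u) - (c0 - ρ0 • u) = (2 * ρ0) • u := by module
    rw [this, gauge_smul' hB (by positivity), hu1, mul_one]
  have := hpq ▸ pair_le_mdiam hB Kb hp hq
  linarith

theorem circum_le_mdiam (hB : IsSymUnitBall B) [Nontrivial (V n)] {K : Set (V n)}
    (hK : IsConvexBody K) : circum B K ≤ mdiam B K := by
  obtain ⟨x0, hx0⟩ : K.Nonempty := hK.2.2.mono interior_subset
  have hD0 : 0 < mdiam B K := mdiam_pos hB hK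
  apply circum_le hD0
  rw [subset_vadd_smul_iff hB hD0]
  intro x hx
  exact pair_le_mdiam hB hK.2.1.isBounded hx hx0

end S4

namespace S4

variable {n : ℕ} {B : Set (V n)}

theorem exists_completion (hB : IsSymUnitBall B) [Nontrivial (V n)] {K : Set (V n)}
    (hK : IsConvexBody K) :
    ∃ M : Set (V n), IsCompleteBody B M ∧ K ⊆ M ∧ mdiam B M = mdiam B K := by
  classical
  set D := mdiam B K with hD
  have hD0 : 0 < D := mdiam_pos hB hK
  obtain ⟨x0, hx0⟩ : K.Nonempty := hK.2.2.mono interior_subset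
  set S : Set (Set (V n)) := {L | IsConvexBody L ∧ K ⊆ L ∧ mdiam B L ≤ D} with hSdef
  have hKS : K ∈ S := ⟨hK, subset_refl K, le_refl D⟩
  have hchain : ∀ c ⊆ S, IsChain (· ⊆ ·) c → c.Nonempty → ∃ ub ∈ S, ∀ s ∈ c, s ⊆ ub := by
    intro c hcS hchain ⟨L0, hL0⟩
    set U := ⋃₀ c with hU
    have hsubZ : U ⊆ x0 +ᵥ D • B := by
      rintro y ⟨L, hLc, hyL⟩
      have hLS := hcS hLc
      rw [mem_vadd_smul_iff hB hD0]
      have hx0L : x0 ∈ L := hLS.2.1 hx0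
      exact (pair_le_mdiam hB hLS.1.2.1.isBounded hyL hx0L).trans hLS.2.2
    have hZcomp : IsCompact (x0 +ᵥ D • B) := (hB.1.2.1.smul D).vadd x0
    have hUbdd : Bornology.IsBounded U := hZcomp.isBounded.subset hsubZ
    have hUconv : Convex ℝ U := by
      intro x hx y hy a b ha hb hab
      obtain ⟨L1, hL1c, hx1⟩ := hx
      obtain ⟨L2, hL2c, hy2⟩ := hy
      rcases hchain.total hL1c hL2c with h | h
      · exact ⟨L2, hL2c, (hcS hL2c).1.1 (h hx1) hy2 ha hb hab⟩
      · exact ⟨L1, hL1c, (hcS hL1c).1.1 hx1 (h hy2) ha hb hab⟩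
    have hUdiam : mdiam B U ≤ D := by
      apply mdiam_le hD0.le
      intro x hx y hy
      obtain ⟨L1, hL1c, hx1⟩ := hx
      obtain ⟨L2, hL2c, hy2⟩ := hy
      rcases hchain.total hL1c hL2c with h | h
      · exact (pair_le_mdiam hB (hcS hL2c).1.2.1.isBounded (h hx1) hy2).trans (hcS hL2c).2.2
      · exact (pair_le_mdiam hB (hcS hL1c).1.2.1.isBounded hx1 (h hy2)).trans (hcS hL1c).2.2
    have hKU : K ⊆ U := fun x hx => ⟨L0, hL0, (hcS hL0).2.1 hx⟩
    refine ⟨closure U, ⟨⟨hUconv.closure, ?_, ?_⟩, hKU.trans subset_closure, ?_⟩,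
      fun s hs => (subset_sUnion_of_mem hs).trans subset_closure⟩
    · exact hZcomp.of_isClosed_subset isClosed_closure
        (closure_minimal hsubZ hZcomp.isClosed)
    · exact hK.2.2.mono (interior_mono (hKU.trans subset_closure))
    · exact (mdiam_closure_le hB hUbdd).trans hUdiam
  obtain ⟨M, hKM, hMmax⟩ := zorn_subset_nonempty S hchain K hKS
  have hMS : M ∈ S := hMmax.prop
  have hMbody : IsConvexBody M := hMS.1
  have hMbdd : Bornology.IsBounded M := hMbody.2.1.isBounded
  have hMdiam : mdiam B M = D := by
    apply le_antisymm hMS.2.2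
    exact mdiam_mono hB hKM hMbdd ⟨x0, hx0⟩
  refine ⟨M, ⟨hMbody, ?_⟩, hKM, hMdiam⟩
  intro x hxM
  by_contra hcon
  push_neg at hcon
  have hdiam_le : mdiam B (M ∪ {x}) ≤ D := by
    rw [← hMdiam]; exact hcon
  set L' := closure (convexHull ℝ (M ∪ {x})) with hL'
  have hMxbdd : Bornology.IsBounded (M ∪ {x}) :=
    hMbdd.union (Bornology.isBounded_singleton (x := x))
  have hhullbdd : Bornology.IsBounded (convexHull ℝ (M ∪ {x})) :=
    isBounded_convexHull.mpr hMxbdd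
  have hL'S : L' ∈ S := by
    refine ⟨⟨(convex_convexHull ℝ _).closure,
      Metric.isCompact_of_isClosed_isBounded isClosed_closure hhullbdd.closure, ?_⟩, ?_, ?_⟩
    · exact hMbody.2.2.mono (interior_mono
        ((Set.subset_union_left.trans (subset_convexHull ℝ _)).trans subset_closure))
    · exact hKM.trans ((Set.subset_union_left.trans (subset_convexHull ℝ _)).trans
        subset_closure)
    · exact (mdiam_closure_le hB hhullbdd).trans
        ((mdiam_convexHull_le hB hMxbdd).trans hdiam_le)
  have hML' : M ⊆ L' :=
    (Set.subset_union_left.trans (subset_convexHull ℝ _)).trans subset_closure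
  have : L' ⊆ M := hMmax.le_of_ge hL'S hML'
  exact hxM (this (subset_closure (subset_convexHull ℝ _ (Set.mem_union_right M rfl))))

end S4

namespace S4

variable {n : ℕ} {B : Set (V n)}

theorem circum_le_bohnenblust (hB : IsSymUnitBall B) [Nontrivial (V n)] {K : Set (V n)}
    (hK : IsConvexBody K) :
    circum B K ≤ (n / (n + 1) : ℝ) * mdiam B K := by
  classical
  set D := mdiam B K with hDdef
  have hD0 : 0 < D := mdiam_pos hB hK
  have hn : 1 ≤ n := by
    rcases Nat.eq_zero_or_pos n with h0 | h
    · exfalso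
      subst h0
      haveI : Subsingleton (V 0) := ⟨fun a b => by ext i; exact Fin.elim0 i⟩
      exact false_of_nontrivial_of_subsingleton (V 0)
    · exact h
  have hnpos : (0:ℝ) < n := by exact_mod_cast Nat.lt_of_lt_of_le Nat.zero_lt_one hn
  set ρ : ℝ := (n / (n + 1) : ℝ) * D with hρdef
  have hρ0 : 0 < ρ := by positivity
  have Kb : Bornology.IsBounded K := hK.2.1.isBounded
  have hinter : (⋂ x : ↥K, ((x : V n) +ᵥ ρ • B)).Nonempty := by
    apply Convex.helly_theorem_compact' (𝕜 := ℝ)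
    · intro i; exact (hB.1.1.smul ρ).vadd _
    · intro i; exact (hB.1.2.1.smul ρ).vadd _
    · intro I hIcard
      rcases I.eq_empty_or_nonempty with rfl | ⟨j0, hj0⟩
      · simp
      set m := I.card with hm
      have hm1 : 1 ≤ m := Finset.card_pos.mpr ⟨j0, hj0⟩
      have hmn : m ≤ n + 1 := by
        rw [finrank_euclideanSpace_fin] at hIcard; exact hIcard
      have hmpos : (0:ℝ) < m := by exact_mod_cast hm1
      set c : V n := (m : ℝ)⁻¹ • ∑ i ∈ I, (i : V n) with hc
      refine ⟨c, ?_⟩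
      rw [Set.mem_iInter₂]
      intro j hjI
      rw [mem_vadd_smul_iff hB hρ0]
      have hj' : (m : ℝ)⁻¹ • (I.card • (j : V n)) = (j : V n) := by
        rw [← Nat.cast_smul_eq_nsmul ℝ, smul_smul, ← hm, inv_mul_cancel₀ hmpos.ne', one_smul]
      have hdiff : c - (j : V n) = (m : ℝ)⁻¹ • ∑ i ∈ I, ((i : V n) - (j : V n)) := by
        calc c - (j : V n)
            = (m : ℝ)⁻¹ • ∑ i ∈ I, (i : V n) - (m : ℝ)⁻¹ • (I.card • (j : V n)) := by
              rw [hj']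
        _ = (m : ℝ)⁻¹ • (∑ i ∈ I, (i : V n) - I.card • (j : V n)) := (smul_sub _ _ _).symm
        _ = (m : ℝ)⁻¹ • ∑ i ∈ I, ((i : V n) - (j : V n)) := by
              rw [Finset.sum_sub_distrib, Finset.sum_const]
      have hsum : ∑ i ∈ I, gauge B ((i : V n) - (j : V n)) ≤ ((m : ℝ) - 1) * D := by
        rw [← Finset.add_sum_erase I _ hjI]
        have h0 : gauge B ((j : V n) - (j : V n)) = 0 := by rw [sub_self, gauge_zero]
        rw [h0, zero_add]
        calc ∑ i ∈ I.erase j, gauge B ((i : V n) - (j : V n))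
            ≤ ∑ _i ∈ I.erase j, D := by
              apply Finset.sum_le_sum
              intro i _
              exact pair_le_mdiam hB Kb i.2 j.2
        _ = ((I.erase j).card : ℝ) * D := by rw [Finset.sum_const, nsmul_eq_mul]
        _ = ((m : ℝ) - 1) * D := by
              rw [Finset.card_erase_of_mem hjI]
              congr 1
              rw [← hm]
              have : 1 ≤ m := hm1
              push_cast [Nat.cast_sub this]
              ring
      calc gauge B (c - (j : V n)) ≤ (m : ℝ)⁻¹ * ∑ i ∈ I, gauge B ((i : V n) - (j : V n)) := by
            rw [hdiff, gauge_smul' hB (by positivity)]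
            gcongr
            exact gauge_finset_sum_le hB _ _
      _ ≤ (m : ℝ)⁻¹ * (((m : ℝ) - 1) * D) := by gcongr
      _ ≤ ρ := by
            have hn0' : (0:ℝ) < (n:ℝ) + 1 := by positivity
            have hmn' : (m : ℝ) ≤ (n : ℝ) + 1 := by exact_mod_cast hmn
            have h1 : ((m:ℝ) - 1) ≤ (m:ℝ) * ((n:ℝ) / ((n:ℝ) + 1)) := by
              rw [mul_div_assoc', le_div_iff₀ hn0']
              nlinarith
            have h2 : ((m:ℝ) - 1) * D ≤ ((m:ℝ) * ((n:ℝ) / ((n:ℝ) + 1))) * D :=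
              mul_le_mul_of_nonneg_right h1 hD0.le
            rw [inv_mul_le_iff₀ hmpos]
            exact h2.trans_eq (by rw [hρdef]; ring)
  obtain ⟨c, hc⟩ := hinter
  apply circum_le hρ0 (c := c)
  rw [subset_vadd_smul_iff hB hρ0]
  intro x hx
  have := Set.mem_iInter.mp hc ⟨x, hx⟩
  rw [mem_vadd_smul_iff hB hρ0] at this
  rw [← gauge_sym hB, neg_sub]
  exact this

theorem asym_le_n (hB : IsSymUnitBall B) [Nontrivial (V n)] {K : Set (V n)}
    (hK : IsCompleteBody B K) : asym K ≤ (n : ℝ) := by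
  obtain ⟨heq, hR0, hRD⟩ := complete_core hB hK
  set D := mdiam B K
  set R := circum B K
  have hD0 : 0 < D := lt_trans hR0 hRD
  have hρ : R ≤ (n / (n + 1) : ℝ) * D := circum_le_bohnenblust hB hK.1
  have hn0 : (0:ℝ) < (n:ℝ) + 1 := by positivity
  have hDρ : 0 < D - (n / (n + 1) : ℝ) * D := by
    have : (n / (n + 1) : ℝ) < 1 := by
      rw [div_lt_one hn0]; linarith
    nlinarith
  rw [heq]
  calc R / (D - R) ≤ ((n / (n + 1) : ℝ) * D) / (D - (n / (n + 1) : ℝ) * D) := by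
        apply div_le_div₀ (by positivity) hρ hDρ
        linarith
  _ = (n : ℝ) := by
        rw [show D - (n / (n + 1) : ℝ) * D = D / ((n:ℝ)+1) by field_simp; ring]
        rw [div_eq_iff (by positivity : (D / ((n:ℝ)+1)) ≠ 0)]
        field_simp

end S4

/-- For complete bodies `j(K) = s(K)/(s(K)+1)`; hence
`j(Mⁿ) = s(Mⁿ)/(s(Mⁿ)+1)`. -/
theorem stmt4 {n : ℕ} (B : Set (V n)) (hB : IsSymUnitBall B) :
    (∀ K : Set (V n), IsCompleteBody B K →
      jungRatio B K = asym K / (asym K + 1)) ∧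
    jungConst B = asymConst B / (asymConst B + 1) := by
  rcases subsingleton_or_nontrivial (V n) with hsub | hnt
  · -- degenerate case: the space is a single point
    have h0B : (0 : V n) ∈ B := interior_subset (S4.zero_mem_int hB)
    have hmd : ∀ K : Set (V n), mdiam B K = 0 := by
      intro K
      refine le_antisymm (Real.sSup_le ?_ le_rfl) S4.mdiam_nonneg
      rintro d ⟨x, _, y, _, rfl⟩
      rw [Subsingleton.elim x y, sub_self, gauge_zero]
    have hcirc : ∀ K : Set (V n), circum B K = 0 := by
      intro K
      have hset : {ρ : ℝ | 0 < ρ ∧ ∃ c : V n, K ⊆ c +ᵥ ρ • B} = Set.Ioi 0 := by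
        ext ρ
        simp only [Set.mem_setOf_eq, Set.mem_Ioi]
        refine ⟨fun h => h.1, fun hρ => ⟨hρ, 0, fun x _ => ?_⟩⟩
        exact ⟨ρ • 0, smul_mem_smul_set h0B, Subsingleton.elim _ _⟩
      rw [circum, hset, csInf_Ioi]
    have hasym0 : ∀ K : Set (V n), K.Nonempty → asym K = 0 := by
      intro K ⟨k, hk⟩
      have hset : {ρ : ℝ | 0 < ρ ∧ ∃ c : V n, -K ⊆ c +ᵥ ρ • K} = Set.Ioi 0 := by
        ext ρ
        simp only [Set.mem_setOf_eq, Set.mem_Ioi]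
        refine ⟨fun h => h.1, fun hρ => ⟨hρ, 0, fun x _ => ?_⟩⟩
        exact ⟨ρ • k, smul_mem_smul_set hk, Subsingleton.elim _ _⟩
      rw [asym, hset, csInf_Ioi]
    have hjr : ∀ K : Set (V n), jungRatio B K = 0 := by
      intro K; rw [jungRatio, hcirc, zero_div]
    constructor
    · intro K hK
      rw [hjr, hasym0 K (hK.1.2.2.mono interior_subset)]
      norm_num
    · have hJ : {j : ℝ | ∃ K : Set (V n), IsConvexBody K ∧ j = jungRatio B K} = {0} := by
        ext j
        simp only [Set.mem_setOf_eq, Set.mem_singleton_iff]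
        constructor
        · rintro ⟨K, _, rfl⟩; exact hjr K
        · rintro rfl; exact ⟨B, hB.1, (hjr B).symm⟩
      have hA : {s : ℝ | ∃ K : Set (V n), IsCompleteBody B K ∧ s = asym K} = {0} := by
        ext s
        simp only [Set.mem_setOf_eq, Set.mem_singleton_iff]
        constructor
        · rintro ⟨K, hK, rfl⟩; exact hasym0 K (hK.1.2.2.mono interior_subset)
        · rintro rfl
          haveI : Finite (V n) := Finite.of_subsingleton
          refine ⟨Set.univ, ⟨⟨convex_univ, Set.finite_univ.isCompact, ?_⟩,
            fun x hx => absurd (Set.mem_univ x) hx⟩,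
            (hasym0 _ ⟨0, Set.mem_univ 0⟩).symm⟩
          rw [interior_univ]
          exact ⟨0, Set.mem_univ 0⟩
      rw [jungConst, asymConst, hJ, hA, csSup_singleton]
      norm_num
  · -- main case
    have part1 : ∀ K : Set (V n), IsCompleteBody B K →
        jungRatio B K = asym K / (asym K + 1) := by
      intro K hK
      obtain ⟨heq, hR0, hRD⟩ := S4.complete_core hB hK
      set D := mdiam B K
      set R := circum B K
      have hD0 : 0 < D := lt_trans hR0 hRD
      have hDR : 0 < D - R := by linarith
      rw [jungRatio, heq]
      rw [div_eq_div_iff hD0.ne' (by positivity)]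
      field_simp
      rw [show circum B K = R from rfl]; ring
    refine ⟨part1, ?_⟩
    set J := {j : ℝ | ∃ K : Set (V n), IsConvexBody K ∧ j = jungRatio B K} with hJdef
    set A := {s : ℝ | ∃ K : Set (V n), IsCompleteBody B K ∧ s = asym K} with hAdef
    have hasym_nonneg : ∀ K : Set (V n), IsCompleteBody B K → 0 ≤ asym K := by
      intro K hK
      obtain ⟨heq, hR0, hRD⟩ := S4.complete_core hB hK
      rw [heq]
      have : (0:ℝ) < mdiam B K - circum B K := by linarith
      positivity
    obtain ⟨M0, hM0comp, _, _⟩ := S4.exists_completion hB hB.1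
    have hAne : A.Nonempty := ⟨asym M0, M0, hM0comp, rfl⟩
    have hAbdd : BddAbove A := by
      refine ⟨(n : ℝ), ?_⟩
      rintro s ⟨K, hK, rfl⟩
      exact S4.asym_le_n hB hK
    have hJbdd : BddAbove J := by
      refine ⟨1, ?_⟩
      rintro j ⟨K, hK, rfl⟩
      rw [jungRatio]
      exact (div_le_one (S4.mdiam_pos hB hK)).mpr (S4.circum_le_mdiam hB hK)
    set s' := sSup A with hs'
    have hs'0 : 0 ≤ s' := le_trans (hasym_nonneg M0 hM0comp) (le_csSup hAbdd ⟨M0, hM0comp, rfl⟩)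
    have fmono : ∀ a b : ℝ, 0 ≤ a → a ≤ b → a / (a + 1) ≤ b / (b + 1) := by
      intro a b ha hab
      rw [div_le_div_iff₀ (by linarith) (by linarith)]
      nlinarith
    have hle : sSup J ≤ s' / (s' + 1) := by
      apply Real.sSup_le
      · rintro j ⟨K, hK, rfl⟩
        obtain ⟨M, hMcomp, hKM, hMd⟩ := S4.exists_completion hB hK
        have h1 : jungRatio B K ≤ jungRatio B M := by
          rw [jungRatio, jungRatio, hMd]
          rw [div_le_div_iff_of_pos_right (S4.mdiam_pos hB hK)]
          exact S4.circum_mono hB hKM hMcomp.1.2.1.isBounded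
        have h2 : jungRatio B M = asym M / (asym M + 1) := part1 M hMcomp
        have h3 : asym M ≤ s' := le_csSup hAbdd ⟨M, hMcomp, rfl⟩
        calc jungRatio B K ≤ jungRatio B M := h1
        _ = asym M / (asym M + 1) := h2
        _ ≤ s' / (s' + 1) := fmono _ _ (hasym_nonneg M hMcomp) h3
      · positivity
    have hge : s' / (s' + 1) ≤ sSup J := by
      apply le_of_forall_pos_le_add
      intro ε hε
      obtain ⟨a, haA, halt⟩ := exists_lt_of_lt_csSup hAne
        (show s' - ε < s' by linarith)
      obtain ⟨K, hKcomp, rfl⟩ := haA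
      set a := asym K
      have ha0 : 0 ≤ a := hasym_nonneg K hKcomp
      have has : a ≤ s' := le_csSup hAbdd ⟨K, hKcomp, rfl⟩
      have hfa : a / (a + 1) ∈ J := ⟨K, hKcomp.1, (part1 K hKcomp).symm⟩
      have hfaJ : a / (a + 1) ≤ sSup J := le_csSup hJbdd hfa
      have hkey : s' / (s' + 1) ≤ a / (a + 1) + ε := by
        have h11 : (1:ℝ) ≤ (a + 1) * (s' + 1) := by nlinarith
        have h12 : ε * 1 ≤ ε * ((a + 1) * (s' + 1)) :=
          mul_le_mul_of_nonneg_left h11 hε.le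
        rw [div_add' _ _ _ (by positivity : (a:ℝ) + 1 ≠ 0),
          div_le_div_iff₀ (by linarith) (by linarith)]
        nlinarith
      linarith
    rw [jungConst, asymConst]
    exact le_antisymm hle hge
end

section
/- In any Minkowski space with unit ball B, every complete convex body K satisfies s(K) = d_BM(K, B): the Minkowski asymmetry of a complete body equals its Banach–Mazur distance to the unit ball of the space. -/
open Set Pointwise

set_option maxHeartbeats 1000000

/-- For a complete body, the Minkowski asymmetry equals the Banach–Mazur
distance to the unit ball of the space. -/
theorem stmt8 {n : ℕ} (B K : Set (V n)) (hB : IsSymUnitBall B)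
    (hK : IsCompleteBody B K) :
    asym K = dBM K B := by
  classical
  obtain ⟨⟨hBconv, hBcomp, hBint⟩, hBsym⟩ := hB
  obtain ⟨⟨hKconv, hKcomp, hKint⟩, hKcompl⟩ := hK
  have hKne : K.Nonempty := hKint.mono interior_subset
  have hBne : B.Nonempty := hBint.mono interior_subset
  rcases subsingleton_or_nontrivial (V n) with hsub | hnt
  · -- degenerate case: the space is a single point
    have huniv : ∀ s : Set (V n), s.Nonempty → s = Set.univ := by
      rintro s ⟨y, hy⟩
      apply Set.eq_univ_of_forall
      intro z; rwa [Subsingleton.elim z y]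
    obtain ⟨k₀, hk₀⟩ := hKne
    have hasym : {ρ : ℝ | 0 < ρ ∧ ∃ c : V n, -K ⊆ c +ᵥ ρ • K} = Set.Ioi 0 := by
      ext ρ
      simp only [Set.mem_setOf_eq, Set.mem_Ioi]
      refine ⟨fun h => h.1, fun h => ⟨h, 0, ?_⟩⟩
      have hne : ((0 : V n) +ᵥ ρ • K) = Set.univ :=
        huniv _ ⟨(0 : V n) +ᵥ ρ • k₀, Set.vadd_mem_vadd_set (Set.smul_mem_smul_set hk₀)⟩
      rw [hne]; exact Set.subset_univ _
    have hdbm : {ρ : ℝ | 0 < ρ ∧ ∃ (A : (V n) ≃ᵃ[ℝ] (V n)) (x : V n),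
        K ⊆ A '' B ∧ A '' B ⊆ x +ᵥ ρ • K} = Set.Ioi 0 := by
      ext ρ
      simp only [Set.mem_setOf_eq, Set.mem_Ioi]
      refine ⟨fun h => h.1, fun h => ⟨h, AffineEquiv.refl ℝ (V n), 0, ?_, ?_⟩⟩
      · have : (AffineEquiv.refl ℝ (V n)) '' B = B := by
          simp
        rw [this, huniv B hBne]; exact Set.subset_univ _
      · have hne : ((0 : V n) +ᵥ ρ • K) = Set.univ :=
          huniv _ ⟨(0 : V n) +ᵥ ρ • k₀, Set.vadd_mem_vadd_set (Set.smul_mem_smul_set hk₀)⟩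
        rw [hne]; exact Set.subset_univ _
    show sInf _ = sInf _
    rw [hasym, hdbm]
  · -- main case
    -- symmetry of B
    have hsymm : ∀ z : V n, z ∈ B → -z ∈ B := by
      intro z hz; rw [hBsym] at hz; exact Set.mem_neg.1 hz
    -- 0 is an interior point of B
    obtain ⟨p₀, hp₀⟩ := hBint
    have hnegp₀ : -p₀ ∈ interior B := by
      rw [mem_interior_iff_mem_nhds] at hp₀ ⊢
      have hcont : ContinuousAt (fun x : V n => -x) (-p₀) := continuous_neg.continuousAt
      have hpre := hcont.preimage_mem_nhds (by rwa [neg_neg] : B ∈ nhds (-(-p₀)))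
      have heq : (fun x : V n => -x) ⁻¹' B = B := by
        ext z
        simp only [Set.mem_preimage]
        constructor
        · intro hz
          have := hsymm _ hz; rwa [neg_neg] at this
        · exact fun hz => hsymm _ hz
      rwa [heq] at hpre
    have h0B : (0 : V n) ∈ interior B := by
      have hconv := hBconv.interior
      have hmem := hconv hp₀ hnegp₀ (by norm_num : (0:ℝ) ≤ 1/2) (by norm_num : (0:ℝ) ≤ 1/2)
        (by norm_num)
      have e : (1/2 : ℝ) • p₀ + (1/2 : ℝ) • (-p₀) = 0 := by
        rw [smul_neg]; exact add_neg_cancel _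
      rwa [e] at hmem
    have hB0 : B ∈ nhds (0 : V n) := mem_interior_iff_mem_nhds.1 h0B
    have habs : Absorbent ℝ B := absorbent_nhds_zero hB0
    obtain ⟨ε, hε, hεB⟩ : ∃ ε > 0, Metric.closedBall (0 : V n) ε ⊆ B := by
      rcases Metric.nhds_basis_closedBall.mem_iff.1 hB0 with ⟨ε, hε, h⟩
      exact ⟨ε, hε, h⟩
    obtain ⟨Mb, hMb, hBMb⟩ : ∃ Mb > 0, B ⊆ Metric.closedBall (0 : V n) Mb := by
      rcases hBcomp.isBounded.subset_closedBall_lt 0 0 with ⟨r, hr, h⟩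
      exact ⟨r, hr, h⟩
    have habsBall : Absorbent ℝ (Metric.closedBall (0 : V n) ε) :=
      absorbent_nhds_zero (Metric.closedBall_mem_nhds 0 hε)
    have hgauge_ub : ∀ x : V n, gauge B x ≤ ‖x‖ / ε := fun x => by
      have := gauge_mono habsBall hεB x
      rwa [gauge_closedBall hε.le] at this
    have hgauge_lb : ∀ x : V n, ‖x‖ / Mb ≤ gauge B x := fun x => by
      have := gauge_mono habs hBMb x
      rwa [gauge_closedBall hMb.le] at this
    have hgadd : ∀ x y : V n, gauge B (x + y) ≤ gauge B x + gauge B y :=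
      gauge_add_le hBconv habs
    have hgneg : ∀ x : V n, gauge B (-x) = gauge B x := gauge_neg hsymm
    have hgsmul : ∀ (a : ℝ), 0 ≤ a → ∀ x : V n, gauge B (a • x) = a * gauge B x :=
      fun a ha x => by rw [gauge_smul_of_nonneg ha, smul_eq_mul]
    have hmemB : ∀ {ρ : ℝ}, 0 < ρ → ∀ {z : V n}, (z ∈ ρ • B ↔ gauge B z ≤ ρ) := by
      intro ρ hρ z
      constructor
      · exact fun h => gauge_le_of_mem hρ.le h
      · intro h
        rw [Set.mem_smul_set_iff_inv_smul_mem₀ hρ.ne']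
        have h1 : gauge B (ρ⁻¹ • z) ≤ 1 := by
          rw [gauge_smul_of_nonneg (inv_nonneg.2 hρ.le), smul_eq_mul]
          calc ρ⁻¹ * gauge B z ≤ ρ⁻¹ * ρ :=
                mul_le_mul_of_nonneg_left h (inv_nonneg.2 hρ.le)
            _ = 1 := inv_mul_cancel₀ hρ.ne'
        have h2 := (gauge_le_one_iff_mem_closure hBconv hB0).1 h1
        rwa [hBcomp.isClosed.closure_eq] at h2
    have hvadd : ∀ (c x : V n) (s : Set (V n)), x ∈ c +ᵥ s ↔ x - c ∈ s := by
      intro c x s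
      rw [Set.mem_vadd_set_iff_neg_vadd_mem, vadd_eq_add, neg_add_eq_sub]
    -- K facts
    obtain ⟨M, hM, hKM⟩ : ∃ M > 0, K ⊆ Metric.closedBall (0 : V n) M := by
      rcases hKcomp.isBounded.subset_closedBall_lt 0 0 with ⟨r, hr, h⟩
      exact ⟨r, hr, h⟩
    set D := mdiam B K with hDdef
    have hDeq : D = sSup {d : ℝ | ∃ x ∈ K, ∃ y ∈ K, d = gauge B (x - y)} := rfl
    have hbddD : BddAbove {d : ℝ | ∃ x ∈ K, ∃ y ∈ K, d = gauge B (x - y)} := by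
      refine ⟨2 * M / ε, ?_⟩
      rintro d ⟨x, hx, y, hy, rfl⟩
      refine (hgauge_ub _).trans ?_
      have hx' : ‖x‖ ≤ M := mem_closedBall_zero_iff.1 (hKM hx)
      have hy' : ‖y‖ ≤ M := mem_closedBall_zero_iff.1 (hKM hy)
      have : ‖x - y‖ ≤ 2 * M := by
        calc ‖x - y‖ ≤ ‖x‖ + ‖y‖ := norm_sub_le x y
          _ ≤ 2 * M := by linarith
      exact div_le_div_of_nonneg_right this hε.le |>.trans_eq rfl
    have hDub : ∀ x ∈ K, ∀ y ∈ K, gauge B (x - y) ≤ D := fun x hx y hy => by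
      rw [hDeq]; exact le_csSup hbddD ⟨x, hx, y, hy, rfl⟩
    obtain ⟨p, hp⟩ := hKint
    have hpK : p ∈ K := interior_subset hp
    obtain ⟨δ, hδ, hδK⟩ : ∃ δ > 0, Metric.closedBall p δ ⊆ K := by
      rcases Metric.nhds_basis_closedBall.mem_iff.1 (mem_interior_iff_mem_nhds.1 hp)
        with ⟨δ, hδ, h⟩
      exact ⟨δ, hδ, h⟩
    obtain ⟨v, hv⟩ := exists_ne (0 : V n)
    have hvnorm : 0 < ‖v‖ := norm_pos_iff.2 hv
    set q := p + (δ / ‖v‖) • v with hqdef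
    have hqp : q - p = (δ / ‖v‖) • v := add_sub_cancel_left p _
    have hqpnorm : ‖q - p‖ = δ := by
      rw [hqp, norm_smul, Real.norm_eq_abs, abs_of_pos (div_pos hδ hvnorm),
        div_mul_cancel₀ _ hvnorm.ne']
    have hqK : q ∈ K := hδK (by
      rw [Metric.mem_closedBall, dist_eq_norm, hqpnorm])
    have hDpos : 0 < D := by
      have h1 : gauge B (q - p) ≤ D := hDub q hqK p hpK
      have h2 : ‖q - p‖ / Mb ≤ gauge B (q - p) := hgauge_lb _
      rw [hqpnorm] at h2
      have h3 : 0 < δ / Mb := div_pos hδ hMb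
      linarith
    -- spherical intersection property of complete bodies
    have hsph : ∀ y : V n, (∀ x ∈ K, gauge B (y - x) ≤ D) → y ∈ K := by
      intro y hy
      by_contra hyK
      have hlt := hKcompl y hyK
      have hle : mdiam B (K ∪ {y}) ≤ D := by
        unfold mdiam
        apply Real.sSup_le
        · rintro d ⟨u, hu, w, hw, rfl⟩
          rcases hu with hu | hu <;> rcases hw with hw | hw
          · exact hDub u hu w hw
          · rw [Set.mem_singleton_iff] at hw; subst hw
            rw [← hgneg, neg_sub]
            exact hy u hu
          · rw [Set.mem_singleton_iff] at hu; subst hu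
            exact hy w hw
          · rw [Set.mem_singleton_iff] at hu hw; subst hu; subst hw
            rw [sub_self, gauge_zero]; exact hDpos.le
        · exact hDpos.le
      linarith
    -- circumradius
    set S : Set ℝ := {ρ : ℝ | 0 < ρ ∧ ∃ c : V n, K ⊆ c +ᵥ ρ • B} with hSdef
    set R := circum B K with hRdef
    have hR : R = sInf S := rfl
    have hSmem : ∀ {ρ : ℝ}, 0 < ρ → ∀ {c : V n}, (∀ x ∈ K, gauge B (x - c) ≤ ρ) → ρ ∈ S := by
      intro ρ hρ c hc
      exact ⟨hρ, c, fun x hx => (hvadd c x _).2 ((hmemB hρ).2 (hc x hx))⟩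
    have hSmem' : ∀ {ρ : ℝ}, ρ ∈ S → ∃ c : V n, ∀ x ∈ K, gauge B (x - c) ≤ ρ := by
      rintro ρ ⟨hρ, c, hc⟩
      exact ⟨c, fun x hx => (hmemB hρ).1 ((hvadd _ _ _).1 (hc hx))⟩
    have hSne : S.Nonempty := by
      refine ⟨M / ε, hSmem (div_pos hM hε) (c := 0) ?_⟩
      intro x hx
      rw [sub_zero]
      exact (hgauge_ub x).trans
        (div_le_div_of_nonneg_right (mem_closedBall_zero_iff.1 (hKM hx)) hε.le |>.trans_eq rfl)
    have hSlb : ∀ ρ ∈ S, D / 2 ≤ ρ := by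
      intro ρ hρS
      have hρpos := hρS.1
      obtain ⟨c', hc'⟩ := hSmem' hρS
      have hD2 : D ≤ 2 * ρ := by
        rw [hDeq]
        apply Real.sSup_le
        · rintro d ⟨x, hx, y, hy, rfl⟩
          have h1 := hc' x hx
          have h2 : gauge B (c' - y) ≤ ρ := by
            have := hc' y hy
            rwa [← neg_sub c' y, hgneg] at this
          have h3 : gauge B (x - y) ≤ gauge B (x - c') + gauge B (c' - y) := by
            have := hgadd (x - c') (c' - y)
            rwa [sub_add_sub_cancel] at this
          linarith
        · linarith
      linarith
    have hSbdd : BddBelow S := ⟨0, fun ρ hρ => hρ.1.le⟩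
    have hRlb : D / 2 ≤ R := by rw [hR]; exact le_csInf hSne hSlb
    have hRpos : 0 < R := by linarith
    -- circumball attained
    have hRS : ∀ k : ℕ, ∃ ρ ∈ S, ρ < R + 1 / ((k : ℝ) + 1) := by
      intro k
      apply exists_lt_of_csInf_lt hSne
      rw [← hR]
      exact lt_add_of_pos_right _ (by positivity)
    choose ρseq hρseqS hρseqlt using hRS
    choose cseq hcseq using fun k => hSmem' (hρseqS k)
    have hcbdd : ∀ k, cseq k ∈ Metric.closedBall p ((R + 1) * Mb) := by
      intro k
      have h1 : gauge B (p - cseq k) ≤ ρseq k := hcseq k p hpK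
      have h2 : ρseq k ≤ R + 1 := by
        have h4 := (hρseqlt k).le
        have h5 : 1 / ((k : ℝ) + 1) ≤ 1 := by
          rw [div_le_one (by positivity)]
          have : (0:ℝ) ≤ (k : ℝ) := Nat.cast_nonneg k
          linarith
        linarith
      have h3 : ‖p - cseq k‖ / Mb ≤ R + 1 := le_trans (hgauge_lb _) (h1.trans h2)
      rw [Metric.mem_closedBall, dist_comm, dist_eq_norm]
      rw [div_le_iff₀ hMb] at h3
      linarith [h3]
    obtain ⟨c, -, φ, hφmono, hφtend⟩ :=
      (isCompact_closedBall p ((R + 1) * Mb)).tendsto_subseq hcbdd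
    have hc : ∀ x ∈ K, gauge B (x - c) ≤ R := by
      intro x hx
      have htend1 : Filter.Tendsto (fun k => gauge B (x - cseq (φ k))) Filter.atTop
          (nhds (gauge B (x - c))) := by
        have hc1 : Filter.Tendsto (fun k => x - cseq (φ k)) Filter.atTop (nhds (x - c)) :=
          tendsto_const_nhds.sub hφtend
        exact ((continuous_gauge hBconv hB0).continuousAt.tendsto).comp hc1
      have htend2 : Filter.Tendsto (fun k => ρseq (φ k)) Filter.atTop (nhds R) := by
        have h4 : Filter.Tendsto (fun k : ℕ => R + 1 / ((φ k : ℝ) + 1)) Filter.atTop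
            (nhds (R + 0)) :=
          tendsto_const_nhds.add
            (tendsto_one_div_add_atTop_nhds_zero_nat.comp hφmono.tendsto_atTop)
        rw [add_zero] at h4
        apply tendsto_of_tendsto_of_tendsto_of_le_of_le
          (tendsto_const_nhds (x := R)) h4
        · intro k
          rw [hR]
          exact csInf_le hSbdd (hρseqS (φ k))
        · exact fun k => (hρseqlt (φ k)).le
      exact le_of_tendsto_of_tendsto' htend1 htend2 (fun k => hcseq (φ k) x hx)
    -- concentric inball
    have hinball : ∀ z : V n, gauge B (z - c) ≤ D - R → z ∈ K := by
      intro z hz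
      apply hsph
      intro x hx
      have h1 : gauge B (z - x) ≤ gauge B (z - c) + gauge B (c - x) := by
        have := hgadd (z - c) (c - x)
        rwa [sub_add_sub_cancel] at this
      have h2 : gauge B (c - x) ≤ R := by
        have := hc x hx
        rwa [← neg_sub c x, hgneg] at this
      linarith
    -- asymmetry set
    set SA : Set ℝ := {ρ : ℝ | 0 < ρ ∧ ∃ a : V n, -K ⊆ a +ᵥ ρ • K} with hSAdef
    have hasymdef : asym K = sInf SA := rfl
    have hSAne : SA.Nonempty := by
      have hρ₁ : (0:ℝ) < M / δ := div_pos hM hδ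
      refine ⟨M / δ, hρ₁, -((M / δ) • p), ?_⟩
      intro w hw
      rw [hvadd]
      have hwK : -w ∈ K := Set.mem_neg.1 hw
      refine Set.mem_smul_set.2 ⟨p + (M / δ)⁻¹ • w, ?_, ?_⟩
      · apply hδK
        rw [Metric.mem_closedBall, dist_eq_norm, add_sub_cancel_left, norm_smul,
          Real.norm_eq_abs, abs_of_pos (inv_pos.2 hρ₁)]
        have hwn : ‖w‖ ≤ M := by
          have := mem_closedBall_zero_iff.1 (hKM hwK)
          rwa [norm_neg] at this
        calc (M / δ)⁻¹ * ‖w‖ ≤ (M / δ)⁻¹ * M :=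
              mul_le_mul_of_nonneg_left hwn (inv_nonneg.2 hρ₁.le)
          _ = δ := by field_simp
      · rw [smul_add, smul_inv_smul₀ hρ₁.ne']
        abel
    -- the key inequality
    have hkey : ∀ ρ ∈ SA, R * (1 + ρ) ≤ ρ * D := by
      rintro ρ ⟨hρ, a, ha⟩
      have h1ρ : (0:ℝ) < 1 + ρ := by linarith
      have hc' : ∀ x ∈ K, gauge B (x - (-((1 + ρ)⁻¹ • a))) ≤ ρ * D / (1 + ρ) := by
        intro x hx
        have hx' : -x ∈ a +ᵥ ρ • K := ha (Set.neg_mem_neg.2 hx)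
        rw [hvadd] at hx'
        obtain ⟨y, hy, hyeq⟩ := Set.mem_smul_set.1 hx'
        have hxy : (1 + ρ) • x + a = ρ • (x - y) := by
          rw [smul_sub, hyeq]
          module
        have h2 : gauge B ((1 + ρ) • x + a) ≤ ρ * D := by
          rw [hxy, hgsmul ρ hρ.le]
          exact mul_le_mul_of_nonneg_left (hDub x hx y hy) hρ.le
        have h3 : x - (-((1 + ρ)⁻¹ • a)) = (1 + ρ)⁻¹ • ((1 + ρ) • x + a) := by
          rw [smul_add, smul_smul, inv_mul_cancel₀ h1ρ.ne', one_smul]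
          module
        rw [h3, hgsmul _ (inv_nonneg.2 h1ρ.le)]
        calc (1 + ρ)⁻¹ * gauge B ((1 + ρ) • x + a) ≤ (1 + ρ)⁻¹ * (ρ * D) :=
              mul_le_mul_of_nonneg_left h2 (inv_nonneg.2 h1ρ.le)
          _ = ρ * D / (1 + ρ) := by rw [inv_mul_eq_div]
      have hmemS : ρ * D / (1 + ρ) ∈ S :=
        hSmem (div_pos (mul_pos hρ hDpos) h1ρ) hc'
      have h4 : R ≤ ρ * D / (1 + ρ) := by
        rw [hR]; exact csInf_le hSbdd hmemS
      rw [le_div_iff₀ h1ρ] at h4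
      linarith
    obtain ⟨ρ₂, hρ₂SA⟩ := hSAne
    have hRD : R < D := by
      have h := hkey ρ₂ hρ₂SA
      have hρ₂ := hρ₂SA.1
      nlinarith
    have hDR : 0 < D - R := by linarith
    set ρ₀ := R / (D - R) with hρ₀def
    have hρ₀pos : 0 < ρ₀ := div_pos hRpos hDR
    have h3 : ρ₀ ≤ asym K := by
      rw [hasymdef]
      apply le_csInf ⟨ρ₂, hρ₂SA⟩
      intro ρ hρSA
      have h := hkey ρ hρSA
      rw [hρ₀def, div_le_iff₀ hDR]
      nlinarith [hρSA.1]
    have hρ₀DR : ρ₀ * (D - R) = R := div_mul_cancel₀ R hDR.ne'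
    set A : (V n) ≃ᵃ[ℝ] (V n) :=
      ((LinearEquiv.smulOfNeZero ℝ (V n) R hRpos.ne').toAffineEquiv).trans
        (AffineEquiv.constVAdd ℝ (V n) c) with hAdef
    have hAapp : ∀ b : V n, A b = c + R • b := fun b => rfl
    have hAimg : A '' B = c +ᵥ R • B := by
      ext z
      constructor
      · rintro ⟨b, hb, rfl⟩
        rw [hAapp, hvadd, add_sub_cancel_left]
        exact Set.smul_mem_smul_set hb
      · intro hz
        rw [hvadd] at hz
        obtain ⟨b, hb, hbe⟩ := Set.mem_smul_set.1 hz
        exact ⟨b, hb, by rw [hAapp, hbe]; abel⟩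
    have hdBMmem : ρ₀ ∈ {ρ : ℝ | 0 < ρ ∧ ∃ (A : (V n) ≃ᵃ[ℝ] (V n)) (x : V n),
        K ⊆ A '' B ∧ A '' B ⊆ x +ᵥ ρ • K} := by
      refine ⟨hρ₀pos, A, c - ρ₀ • c, ?_, ?_⟩
      · intro x hx
        rw [hAimg, hvadd]
        exact (hmemB hRpos).2 (hc x hx)
      · intro z hz
        rw [hAimg, hvadd] at hz
        rw [hvadd]
        obtain ⟨b, hb, hbe⟩ := Set.mem_smul_set.1 hz
        refine Set.mem_smul_set.2 ⟨c + (D - R) • b, ?_, ?_⟩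
        · apply hinball
          rw [add_sub_cancel_left, hgsmul _ hDR.le]
          calc (D - R) * gauge B b ≤ (D - R) * 1 :=
                mul_le_mul_of_nonneg_left (gauge_le_one_of_mem hb) hDR.le
            _ = D - R := mul_one _
        · rw [smul_add, smul_smul, hρ₀DR, hbe]
          abel
    have h2 : dBM K B ≤ ρ₀ := by
      show sInf _ ≤ ρ₀
      exact csInf_le ⟨0, fun ρ hρ => hρ.1.le⟩ hdBMmem
    have hsubset : {ρ : ℝ | 0 < ρ ∧ ∃ (A : (V n) ≃ᵃ[ℝ] (V n)) (x : V n),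
        K ⊆ A '' B ∧ A '' B ⊆ x +ᵥ ρ • K} ⊆ SA := by
      rintro ρ ⟨hρ, A', x, hKA, hAx⟩
      refine ⟨hρ, x - (A' 0 + A' 0), ?_⟩
      intro w hw
      have hwK : -w ∈ K := Set.mem_neg.1 hw
      obtain ⟨b, hb, hbe⟩ := hKA hwK
      have hnb : -b ∈ B := hsymm b hb
      have hmb : A' (-b) ∈ x +ᵥ ρ • K := hAx ⟨-b, hnb, rfl⟩
      rw [hvadd] at hmb
      obtain ⟨k, hk, hke⟩ := Set.mem_smul_set.1 hmb
      have hA2 : A' (-b) + A' b = A' 0 + A' 0 := by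
        have e1 := A'.toAffineMap.linearMap_vsub (-b) 0
        have e2 := A'.toAffineMap.linearMap_vsub b 0
        simp only [vsub_eq_sub, sub_zero, AffineEquiv.coe_toAffineMap] at e1 e2
        have e3 : A'.toAffineMap.linear (-b) = -(A'.toAffineMap.linear b) :=
          map_neg _ b
        have e4 : A' (-b) - A' 0 = -(A' b - A' 0) := by rw [← e1, e3, e2]
        linear_combination (norm := module) e4
      have h5 : A' (-b) = A' 0 + A' 0 + w := by
        rw [hbe] at hA2
        linear_combination (norm := module) hA2
      rw [hvadd]
      refine Set.mem_smul_set.2 ⟨k, hk, ?_⟩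
      rw [hke, h5]
      abel
    have h1 : asym K ≤ dBM K B := by
      rw [hasymdef]
      show sInf SA ≤ sInf _
      exact csInf_le_csInf ⟨0, fun ρ hρ => hρ.1.le⟩ ⟨ρ₀, hdBMmem⟩ hsubset
    exact le_antisymm h1 (h2.trans h3)
end

section
/- For any Minkowski space M^n, the ceiling of the maximal Minkowski asymmetry over complete bodies is at most the Helly dimension: ⌈s(M^n)⌉ ≤ him(M^n). -/
open Set Pointwise

namespace Stmt10Aux

open Topology Module

variable {n : ℕ} {B : Set (V n)}

lemma neg_mem (hB : IsSymUnitBall B) {x : V n} (hx : x ∈ B) : -x ∈ B := by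
  rw [hB.2, Set.mem_neg, neg_neg]; exact hx

lemma zero_mem_interior (hB : IsSymUnitBall B) : (0 : V n) ∈ interior B := by
  obtain ⟨u, hu⟩ := hB.1.2.2
  have hnegset : -B = (-1 : ℝ) • B := by
    ext x
    constructor
    · intro h
      exact ⟨-x, h, by simp⟩
    · rintro ⟨y, hy, rfl⟩
      simpa using hy
  have hnu : -u ∈ interior B := by
    have h1 : interior B = (-1 : ℝ) • interior B := by
      conv_lhs => rw [hB.2, hnegset]
      rw [interior_smul₀ (by norm_num : (-1:ℝ) ≠ 0)]
    rw [h1]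
    exact ⟨u, hu, by simp⟩
  have hconv : Convex ℝ (interior B) := hB.1.1.interior
  have := hconv hu hnu (le_of_lt one_half_pos) (le_of_lt one_half_pos) (by norm_num)
  simpa using this

lemma nhds_zero (hB : IsSymUnitBall B) : B ∈ 𝓝 (0 : V n) :=
  mem_interior_iff_mem_nhds.1 (zero_mem_interior hB)

lemma absorbent (hB : IsSymUnitBall B) : Absorbent ℝ B :=
  absorbent_nhds_zero (nhds_zero hB)

lemma vonNBounded (hB : IsSymUnitBall B) : Bornology.IsVonNBounded ℝ B :=
  (NormedSpace.isVonNBounded_iff ℝ).2 hB.1.2.1.isBounded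

lemma closure_eq (hB : IsSymUnitBall B) : closure B = B :=
  hB.1.2.1.isClosed.closure_eq

lemma gauge_neg' (hB : IsSymUnitBall B) (x : V n) : gauge B (-x) = gauge B x :=
  gauge_neg (fun _ h => neg_mem hB h) x

lemma gauge_sub_comm (hB : IsSymUnitBall B) (x y : V n) :
    gauge B (x - y) = gauge B (y - x) := by
  rw [← gauge_neg' hB (x - y), neg_sub]

lemma gauge_add_le' (hB : IsSymUnitBall B) (x y : V n) :
    gauge B (x + y) ≤ gauge B x + gauge B y :=
  gauge_add_le hB.1.1 (absorbent hB) x y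

lemma gauge_smul' (hB : IsSymUnitBall B) {a : ℝ} (ha : 0 ≤ a) (x : V n) :
    gauge B (a • x) = a * gauge B x := by
  rw [gauge_smul_of_nonneg ha, smul_eq_mul]

lemma mem_smul_of_gauge_le (hB : IsSymUnitBall B) {a : ℝ} (ha : 0 < a) {x : V n}
    (h : gauge B x ≤ a) : x ∈ a • B := by
  rw [Set.mem_smul_set_iff_inv_smul_mem₀ (ne_of_gt ha)]
  rw [← closure_eq hB, ← gauge_le_one_iff_mem_closure hB.1.1 (nhds_zero hB)]
  rw [gauge_smul' hB (le_of_lt (inv_pos.2 ha))]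
  rw [inv_mul_le_iff₀ ha, mul_one]
  exact h

lemma mem_one_of_gauge_le (hB : IsSymUnitBall B) {x : V n} (h : gauge B x ≤ 1) : x ∈ B := by
  have := mem_smul_of_gauge_le hB one_pos h
  simpa using this

lemma gauge_sum_le (hB : IsSymUnitBall B) {ι : Type*} (s : Finset ι) (f : ι → V n) :
    gauge B (∑ i ∈ s, f i) ≤ ∑ i ∈ s, gauge B (f i) := by
  classical
  induction s using Finset.cons_induction with
  | empty => simp [gauge_zero]
  | cons i s hi ih =>
    rw [Finset.sum_cons, Finset.sum_cons]
    exact le_trans (gauge_add_le' hB _ _) (by linarith)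

lemma bddAbove_pairs (hB : IsSymUnitBall B) {K : Set (V n)} (hK : IsCompact K) :
    BddAbove {d : ℝ | ∃ x ∈ K, ∃ y ∈ K, d = gauge B (x - y)} := by
  obtain ⟨ε, hε, hball⟩ := Metric.mem_nhds_iff.1 (nhds_zero hB)
  obtain ⟨M, hM⟩ := hK.isBounded.subset_closedBall 0
  refine ⟨2 * M / ε, ?_⟩
  rintro d ⟨x, hx, y, hy, rfl⟩
  have h1 : ε * gauge B (x - y) ≤ ‖x - y‖ := mul_gauge_le_norm hball
  have h2 : ‖x - y‖ ≤ 2 * M := by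
    have hx' := hM hx; have hy' := hM hy
    simp only [Metric.mem_closedBall, dist_zero_right] at hx' hy'
    calc ‖x - y‖ ≤ ‖x‖ + ‖y‖ := norm_sub_le _ _
      _ ≤ 2 * M := by linarith
  rw [le_div_iff₀ hε]
  calc gauge B (x - y) * ε = ε * gauge B (x - y) := mul_comm _ _
    _ ≤ 2 * M := le_trans h1 h2

lemma gauge_le_mdiam (hB : IsSymUnitBall B) {K : Set (V n)} (hK : IsCompact K)
    {x y : V n} (hx : x ∈ K) (hy : y ∈ K) : gauge B (x - y) ≤ mdiam B K :=
  le_csSup (bddAbove_pairs hB hK) ⟨x, hx, y, hy, rfl⟩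

lemma mdiam_nonneg (hB : IsSymUnitBall B) {K : Set (V n)} (hK : IsCompact K)
    (hne : K.Nonempty) : 0 ≤ mdiam B K := by
  obtain ⟨x, hx⟩ := hne
  have := gauge_le_mdiam hB hK hx hx
  simpa [gauge_zero] using this

lemma mdiam_le {K : Set (V n)} {d : ℝ} (hd : 0 ≤ d)
    (h : ∀ x ∈ K, ∀ y ∈ K, gauge B (x - y) ≤ d) : mdiam B K ≤ d := by
  apply Real.sSup_le _ hd
  rintro r ⟨x, hx, y, hy, rfl⟩
  exact h x hx y hy

/-- Spherical intersection property of complete bodies. -/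
lemma mem_of_forall_gauge_le (hB : IsSymUnitBall B) {K : Set (V n)}
    (hK : IsCompleteBody B K) (hne : K.Nonempty) {z : V n}
    (h : ∀ x ∈ K, gauge B (z - x) ≤ mdiam B K) : z ∈ K := by
  by_contra hz
  have h2 := hK.2 z hz
  have hD0 : 0 ≤ mdiam B K := mdiam_nonneg hB hK.1.2.1 hne
  have hle : mdiam B (K ∪ {z}) ≤ mdiam B K := by
    apply mdiam_le hD0
    rintro x (hx | rfl) y (hy | rfl)
    · exact gauge_le_mdiam hB hK.1.2.1 hx hy
    · rw [gauge_sub_comm hB]; exact h x hx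
    · exact h y hy
    · simpa using hD0
  exact absurd (lt_of_lt_of_le h2 hle) (lt_irrefl _)

/-- Key lemma: the Helly property with parameter `k` bounds the asymmetry of
complete bodies by `k`. -/
lemma asym_le_of_helly (hB : IsSymUnitBall B) {k : ℕ} (hk : 0 < k)
    (hH : HellyProp B k) {K : Set (V n)} (hK : IsCompleteBody B K) :
    asym K ≤ (k : ℝ) := by
  have hkR : (0 : ℝ) < k := by exact_mod_cast hk
  have hbdd : BddBelow {ρ : ℝ | 0 < ρ ∧ ∃ c : V n, -K ⊆ c +ᵥ ρ • K} :=
    ⟨0, fun ρ hρ => le_of_lt hρ.1⟩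
  have hKcomp : IsCompact K := hK.1.2.1
  have hKne : K.Nonempty := Set.Nonempty.mono interior_subset hK.1.2.2
  obtain ⟨p, hp⟩ := hKne
  by_cases hsing : ∀ x ∈ K, ∀ y ∈ K, x = y
  · -- K is a singleton
    apply csInf_le hbdd
    refine ⟨hkR, -p - (k : ℝ) • p, ?_⟩
    intro u hu
    rw [Set.mem_neg] at hu
    have hup : -u = p := hsing _ hu _ hp
    refine ⟨(k : ℝ) • p, ⟨p, hp, rfl⟩, ?_⟩
    show (-p - (k : ℝ) • p) +ᵥ ((k : ℝ) • p) = u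
    rw [vadd_eq_add, ← hup]; abel
  · push_neg at hsing
    obtain ⟨x0, hx0, y0, hy0, hxy⟩ := hsing
    set D := mdiam B K with hDdef
    have hDpos : 0 < D := by
      have h1 : 0 < gauge B (x0 - y0) :=
        (gauge_pos (absorbent hB) (vonNBounded hB)).2 (sub_ne_zero.2 hxy)
      exact lt_of_lt_of_le h1 (gauge_le_mdiam hB hKcomp hx0 hy0)
    set ρ : ℝ := k * D / (k + 1) with hρdef
    have hρpos : 0 < ρ := by positivity
    have hDρ : D - ρ = D / (k + 1) := by
      have hk1 : (k : ℝ) + 1 ≠ 0 := by positivity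
      rw [hρdef, eq_div_iff hk1, sub_mul, div_mul_cancel₀ _ hk1]; ring
    have hDρpos : 0 < D - ρ := by rw [hDρ]; positivity
    -- Helly application to get a circumcenter
    have hHelly := hH (ρ⁻¹ • K) (Set.Nonempty.smul_set ⟨p, hp⟩) ?_
    · obtain ⟨c₀, hc₀⟩ := hHelly
      simp only [Set.mem_iInter] at hc₀
      set c : V n := ρ • c₀ with hcdef
      have hcirc : ∀ x ∈ K, gauge B (x - c) ≤ ρ := by
        intro x hx
        have hx' : ρ⁻¹ • x ∈ ρ⁻¹ • K := Set.smul_mem_smul_set hx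
        have := hc₀ _ hx'
        rw [Set.mem_vadd_set_iff_neg_vadd_mem, vadd_eq_add] at this
        have h1 : gauge B (-(ρ⁻¹ • x) + c₀) ≤ 1 := gauge_le_one_of_mem this
        have h2 : gauge B (ρ • (-(ρ⁻¹ • x) + c₀)) ≤ ρ := by
          rw [gauge_smul' hB (le_of_lt hρpos)]
          calc ρ * gauge B (-(ρ⁻¹ • x) + c₀) ≤ ρ * 1 := by
                exact mul_le_mul_of_nonneg_left h1 (le_of_lt hρpos)
            _ = ρ := mul_one ρ
        have h3 : ρ • (-(ρ⁻¹ • x) + c₀) = c - x := by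
          rw [smul_add, smul_neg, smul_smul, mul_inv_cancel₀ (ne_of_gt hρpos), one_smul, hcdef]
          abel
        rw [h3] at h2
        rw [gauge_sub_comm hB]; exact h2
      -- the inner translate and the asymmetry bound
      apply csInf_le hbdd
      refine ⟨hkR, -c - (k : ℝ) • c, ?_⟩
      intro u hu
      rw [Set.mem_neg] at hu
      set x : V n := -u with hxdef
      have hxK : x ∈ K := hu
      set w : V n := c + (k : ℝ)⁻¹ • (c - x) with hwdef
      have hwK : w ∈ K := by
        apply mem_of_forall_gauge_le hB hK ⟨p, hp⟩
        intro x' hx'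
        have h1 : gauge B (w - x') ≤ gauge B (c - x') + gauge B ((k : ℝ)⁻¹ • (c - x)) := by
          have : w - x' = (c - x') + (k : ℝ)⁻¹ • (c - x) := by rw [hwdef]; abel
          rw [this]; exact gauge_add_le' hB _ _
        have h2 : gauge B (c - x') ≤ ρ := by
          rw [gauge_sub_comm hB]; exact hcirc x' hx'
        have h3 : gauge B ((k : ℝ)⁻¹ • (c - x)) ≤ (k : ℝ)⁻¹ * ρ := by
          rw [gauge_smul' hB (le_of_lt (inv_pos.2 hkR))]
          apply mul_le_mul_of_nonneg_left _ (le_of_lt (inv_pos.2 hkR))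
          rw [gauge_sub_comm hB]; exact hcirc x hxK
        have h4 : ρ + (k : ℝ)⁻¹ * ρ = D := by
          rw [hρdef]; field_simp
        calc gauge B (w - x') ≤ ρ + (k : ℝ)⁻¹ * ρ := by linarith
          _ = D := h4
      refine ⟨(k : ℝ) • w, ⟨w, hwK, rfl⟩, ?_⟩
      show (-c - (k : ℝ) • c) +ᵥ ((k : ℝ) • w) = u
      rw [vadd_eq_add, hwdef, smul_add, smul_inv_smul₀ (ne_of_gt hkR), hxdef]
      abel
    · -- the Helly premise via centroids
      intro J hJX hJcard
      rcases J.eq_empty_or_nonempty with rfl | hJne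
      · simp
      have hm : 0 < J.card := Finset.card_pos.2 hJne
      have hmR : (0 : ℝ) < J.card := by exact_mod_cast hm
      set g : V n := (J.card : ℝ)⁻¹ • ∑ z ∈ J, z with hgdef
      refine ⟨g, ?_⟩
      simp only [Set.mem_iInter]
      intro y hy
      rw [Set.mem_vadd_set_iff_neg_vadd_mem, vadd_eq_add]
      apply mem_one_of_gauge_le hB
      have hgy : -y + g = (J.card : ℝ)⁻¹ • ∑ z ∈ J, (z - y) := by
        rw [Finset.sum_sub_distrib, smul_sub, hgdef]
        rw [Finset.sum_const, ← Nat.cast_smul_eq_nsmul ℝ, smul_smul,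
          inv_mul_cancel₀ (ne_of_gt hmR), one_smul]
        abel
      have hpair : ∀ z ∈ J, gauge B (z - y) ≤ D / ρ := by
        intro z hz
        obtain ⟨a, ha, rfl⟩ := hJX hz
        obtain ⟨b, hb, rfl⟩ := hJX hy
        have : ρ⁻¹ • a - ρ⁻¹ • b = ρ⁻¹ • (a - b) := by rw [smul_sub]
        rw [this, gauge_smul' hB (le_of_lt (inv_pos.2 hρpos))]
        rw [div_eq_inv_mul]
        exact mul_le_mul_of_nonneg_left (gauge_le_mdiam hB hKcomp ha hb)
          (le_of_lt (inv_pos.2 hρpos))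
      have hyJ : y ∈ J := hy
      have hsum : ∑ z ∈ J, gauge B (z - y) ≤ ((J.card : ℝ) - 1) * (D / ρ) := by
        classical
        rw [← Finset.add_sum_erase J _ hyJ]
        have h0 : gauge B (y - y) = 0 := by simp [gauge_zero]
        rw [h0, zero_add]
        calc ∑ z ∈ J.erase y, gauge B (z - y) ≤ ∑ _z ∈ J.erase y, (D / ρ) :=
              Finset.sum_le_sum (fun z hz => hpair z (Finset.mem_of_mem_erase hz))
          _ = ((J.erase y).card : ℝ) * (D / ρ) := by rw [Finset.sum_const, nsmul_eq_mul]
          _ = ((J.card : ℝ) - 1) * (D / ρ) := by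
              rw [Finset.card_erase_of_mem hyJ]
              have : (1 : ℕ) ≤ J.card := hm
              rw [Nat.cast_sub this, Nat.cast_one]
      have hDρ' : D / ρ = (k + 1) / k := by
        rw [hρdef]; field_simp
      have hcardR : (J.card : ℝ) ≤ (k : ℝ) + 1 := by exact_mod_cast hJcard
      calc gauge B (-y + g) = (J.card : ℝ)⁻¹ * gauge B (∑ z ∈ J, (z - y)) := by
            rw [hgy, gauge_smul' hB (le_of_lt (inv_pos.2 hmR))]
        _ ≤ (J.card : ℝ)⁻¹ * (((J.card : ℝ) - 1) * (D / ρ)) := by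
            apply mul_le_mul_of_nonneg_left _ (le_of_lt (inv_pos.2 hmR))
            exact le_trans (gauge_sum_le hB J _) hsum
        _ ≤ 1 := by
            rw [hDρ']
            rw [inv_mul_le_iff₀ hmR, mul_one]
            have hm1 : (1 : ℝ) ≤ (J.card : ℝ) := by exact_mod_cast hm
            have h5 : ((J.card : ℝ) - 1) * ((k : ℝ) + 1) ≤ (J.card : ℝ) * k := by nlinarith
            calc ((J.card : ℝ) - 1) * (((k : ℝ) + 1) / k)
                = ((J.card : ℝ) - 1) * ((k : ℝ) + 1) / k := by ring
              _ ≤ (J.card : ℝ) * k / k := by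
                  exact (div_le_div_iff_of_pos_right hkR).2 h5
              _ = (J.card : ℝ) := by field_simp

lemma vadd_eq_image (x : V n) (S : Set (V n)) : x +ᵥ S = (fun y => x + y) '' S := rfl

lemma hellyProp_max (hB : IsSymUnitBall B) : HellyProp B (max 1 n) := by
  classical
  intro X hX hprem
  have key : (⋂ x : X, ((x : V n) +ᵥ B)).Nonempty := by
    apply Convex.helly_theorem_compact' (𝕜 := ℝ)
    · intro i
      rw [vadd_eq_image]
      exact hB.1.1.translate (i : V n)
    · intro i
      rw [vadd_eq_image]
      exact hB.1.2.1.image (continuous_const.add continuous_id)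
    · intro I hIcard
      have hJ := hprem (I.image Subtype.val) ?_ ?_
      · obtain ⟨z, hz⟩ := hJ
        refine ⟨z, ?_⟩
        simp only [Set.mem_iInter]
        intro i hi
        simp only [Set.mem_iInter, Finset.coe_image, Set.mem_image] at hz
        exact hz _ ⟨i, hi, rfl⟩
      · intro v hv
        simp only [Finset.coe_image, Set.mem_image] at hv
        obtain ⟨i, _, rfl⟩ := hv
        exact i.2
      · calc (I.image Subtype.val).card ≤ I.card := Finset.card_image_le
          _ ≤ Module.finrank ℝ (V n) + 1 := hIcard
          _ ≤ max 1 n + 1 := by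
              rw [finrank_euclideanSpace_fin]
              exact Nat.add_le_add_right (le_max_right 1 n) 1
  obtain ⟨z, hz⟩ := key
  refine ⟨z, ?_⟩
  simp only [Set.mem_iInter] at hz ⊢
  intro x hx
  exact hz ⟨x, hx⟩

end Stmt10Aux

/-- `⌈s(Mⁿ)⌉ ≤ him(Mⁿ)`. -/
theorem stmt10 {n : ℕ} (B : Set (V n)) (hB : IsSymUnitBall B) :
    ⌈asymConst B⌉ ≤ (hellyDim B : ℤ) := by
  have hne : (max 1 n) ∈ {k : ℕ | 0 < k ∧ HellyProp B k} :=
    ⟨lt_of_lt_of_le one_pos (le_max_left 1 n), Stmt10Aux.hellyProp_max hB⟩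
  have hmem : hellyDim B ∈ {k : ℕ | 0 < k ∧ HellyProp B k} := Nat.sInf_mem ⟨_, hne⟩
  have h1 : asymConst B ≤ (hellyDim B : ℝ) := by
    apply Real.sSup_le _ (by exact_mod_cast Nat.zero_le _)
    rintro s ⟨K, hK, rfl⟩
    exact Stmt10Aux.asym_le_of_helly hB hmem.1 hmem.2 hK
  rw [Int.ceil_le]
  push_cast
  exact h1
end

section
/- For any convex body K in a Minkowski space and any pseudo completion K^+ = conv(K ∪ (c + (D(K)−R(K))B)) taken with respect to a circumcenter c of K, it holds that D(K^+) = D(K), R(K^+) = R(K), and for any completion K* of K contained in the circumball c + R(K)B one has r(K^+) = r(K*) and s(K^+) = s(K*). -/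
open Set Pointwise

namespace Stmt13Aux

variable {n : ℕ} {B : Set (V n)}

lemma zero_mem_int (hB : IsSymUnitBall B) : (0 : V n) ∈ interior B := by
  obtain ⟨⟨hconv, hcomp, ⟨x, hx⟩⟩, hsym⟩ := hB
  have hx' : -x ∈ interior B := by
    have hopen : IsOpen (-(interior B)) := isOpen_interior.neg
    have hsub : -(interior B) ⊆ B := by
      nth_rewrite 2 [hsym]
      exact Set.neg_subset_neg.mpr interior_subset
    exact interior_maximal hsub hopen (Set.neg_mem_neg.mpr hx)
  have h := hconv.interior hx hx' (by norm_num : (0:ℝ) ≤ 1/2)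
    (by norm_num : (0:ℝ) ≤ 1/2) (by norm_num)
  simpa using h

lemma nhds0 (hB : IsSymUnitBall B) : B ∈ nhds (0 : V n) :=
  mem_interior_iff_mem_nhds.mp (zero_mem_int hB)

lemma absB (hB : IsSymUnitBall B) : Absorbent ℝ B := absorbent_nhds_zero (nhds0 hB)

lemma vnbB (hB : IsSymUnitBall B) : Bornology.IsVonNBounded ℝ B :=
  (NormedSpace.isVonNBounded_iff ℝ).mpr hB.1.2.1.isBounded

lemma gauge_negB (hB : IsSymUnitBall B) (x : V n) : gauge B (-x) = gauge B x :=
  gauge_neg (fun y hy => by rw [hB.2]; exact Set.neg_mem_neg.mpr hy) x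

lemma gauge_tri (hB : IsSymUnitBall B) (x y z : V n) :
    gauge B (x - y) ≤ gauge B (x - z) + gauge B (z - y) := by
  have := gauge_add_le hB.1.1 (absB hB) (x - z) (z - y)
  simpa using this

lemma mem_smul_iff (hB : IsSymUnitBall B) {t : ℝ} (ht : 0 < t) {x : V n} :
    x ∈ t • B ↔ gauge B x ≤ t := by
  constructor
  · exact fun h => gauge_le_of_mem ht.le h
  · intro h
    have h1 : gauge B (t⁻¹ • x) ≤ 1 := by
      rw [gauge_smul_of_nonneg (inv_nonneg.mpr ht.le), smul_eq_mul]
      calc t⁻¹ * gauge B x ≤ t⁻¹ * t :=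
            mul_le_mul_of_nonneg_left h (inv_nonneg.mpr ht.le)
        _ = 1 := inv_mul_cancel₀ ht.ne'
    have h2 : t⁻¹ • x ∈ closure B :=
      (gauge_le_one_iff_mem_closure hB.1.1 (nhds0 hB)).mp h1
    rw [hB.1.2.1.isClosed.closure_eq] at h2
    exact ⟨t⁻¹ • x, h2, smul_inv_smul₀ ht.ne' x⟩

lemma mem_vadd_iff {c x : V n} {S : Set (V n)} : x ∈ c +ᵥ S ↔ x - c ∈ S := by
  rw [Set.mem_vadd_set_iff_neg_vadd_mem, vadd_eq_add, neg_add_eq_sub]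

lemma mem_ball_iff (hB : IsSymUnitBall B) {t : ℝ} (ht : 0 < t) {c x : V n} :
    x ∈ c +ᵥ t • B ↔ gauge B (x - c) ≤ t := by
  rw [mem_vadd_iff, mem_smul_iff hB ht]

lemma gauge_le_of_mem_ball (hB : IsSymUnitBall B) {t : ℝ} (ht : 0 ≤ t) {c x : V n}
    (h : x ∈ c +ᵥ t • B) : gauge B (x - c) ≤ t :=
  gauge_le_of_mem ht (mem_vadd_iff.mp h)

lemma diam_bddAbove (hB : IsSymUnitBall B) {L : Set (V n)} {c' : V n} {t : ℝ}
    (ht : 0 ≤ t) (hL : L ⊆ c' +ᵥ t • B) :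
    BddAbove {d : ℝ | ∃ x ∈ L, ∃ y ∈ L, d = gauge B (x - y)} := by
  refine ⟨2 * t, ?_⟩
  rintro d ⟨x, hx, y, hy, rfl⟩
  have h1 : gauge B (x - c') ≤ t := gauge_le_of_mem_ball hB ht (hL hx)
  have h2 : gauge B (c' - y) ≤ t := by
    rw [← gauge_negB hB, neg_sub]
    exact gauge_le_of_mem_ball hB ht (hL hy)
  calc gauge B (x - y) ≤ gauge B (x - c') + gauge B (c' - y) := gauge_tri hB x y c'
    _ ≤ 2 * t := by linarith

lemma gauge_le_mdiam (hB : IsSymUnitBall B) {L : Set (V n)} {c' : V n} {t : ℝ}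
    (ht : 0 ≤ t) (hL : L ⊆ c' +ᵥ t • B) {x y : V n} (hx : x ∈ L) (hy : y ∈ L) :
    gauge B (x - y) ≤ mdiam B L :=
  le_csSup (diam_bddAbove hB ht hL) ⟨x, hx, y, hy, rfl⟩

lemma mdiam_le {L : Set (V n)} (hne : L.Nonempty) {d : ℝ}
    (h : ∀ x ∈ L, ∀ y ∈ L, gauge B (x - y) ≤ d) : mdiam B L ≤ d := by
  obtain ⟨x0, hx0⟩ := hne
  refine csSup_le ⟨gauge B (x0 - x0), x0, hx0, x0, hx0, rfl⟩ ?_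
  rintro d' ⟨x, hx, y, hy, rfl⟩
  exact h x hx y hy

lemma circum_bddBelow {L : Set (V n)} :
    BddBelow {ρ : ℝ | 0 < ρ ∧ ∃ c' : V n, L ⊆ c' +ᵥ ρ • B} :=
  ⟨0, fun _ hρ => hρ.1.le⟩

lemma circum_le {L : Set (V n)} {c' : V n} {t : ℝ} (ht : 0 < t)
    (h : L ⊆ c' +ᵥ t • B) : circum B L ≤ t :=
  csInf_le circum_bddBelow ⟨ht, c', h⟩

lemma sets_eq_of_subsingleton {α : Type*} [Subsingleton α] {s t : Set α}
    (hs : s.Nonempty) (ht : t.Nonempty) : s = t := by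
  obtain ⟨a, ha⟩ := hs
  obtain ⟨b, hb⟩ := ht
  ext z
  have hz1 : z ∈ s := by rwa [Subsingleton.elim z a]
  have hz2 : z ∈ t := by rwa [Subsingleton.elim z b]
  simp [hz1, hz2]

end Stmt13Aux

set_option maxHeartbeats 2000000 in
open Stmt13Aux in
/-- Basic properties of the pseudo completion. -/
theorem stmt13 {n : ℕ} (B K : Set (V n)) (hB : IsSymUnitBall B)
    (hK : IsConvexBody K) (c : V n) (hc : K ⊆ c +ᵥ circum B K • B) :
    mdiam B (pseudoCompletion B K c) = mdiam B K ∧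
    circum B (pseudoCompletion B K c) = circum B K ∧
    ∀ Kstar : Set (V n), IsCompletionOf B Kstar K →
      Kstar ⊆ c +ᵥ circum B K • B →
      inrad B (pseudoCompletion B K c) = inrad B Kstar ∧
      asym (pseudoCompletion B K c) = asym Kstar := by
  classical
  obtain ⟨hKconv, hKcomp, x0, hx0⟩ := hK
  have hKne : K.Nonempty := ⟨x0, interior_subset hx0⟩
  have hKP : K ⊆ pseudoCompletion B K c :=
    Set.subset_union_left.trans (subset_convexHull ℝ _)
  have hPne : (pseudoCompletion B K c).Nonempty := hKne.mono hKP
  obtain hss | hnt := subsingleton_or_nontrivial (V n)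
  · have hPK : pseudoCompletion B K c = K := sets_eq_of_subsingleton hPne hKne
    refine ⟨by rw [hPK], by rw [hPK], ?_⟩
    rintro Kstar ⟨⟨⟨_, _, hSint⟩, _⟩, _, _⟩ _
    have hSne : Kstar.Nonempty := hSint.mono interior_subset
    have hPS : pseudoCompletion B K c = Kstar := sets_eq_of_subsingleton hPne hSne
    exact ⟨by rw [hPS], by rw [hPS]⟩
  -- main case
  set D := mdiam B K with hDdef
  set R := circum B K with hRdef
  set G := c +ᵥ (D - R) • B with hGdef
  set P := pseudoCompletion B K c with hPdef
  have hPhull : P = convexHull ℝ (K ∪ G) := rfl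
  -- a second point of K
  obtain ⟨δ, hδpos, hδ⟩ : ∃ δ > 0, Metric.ball x0 δ ⊆ K :=
    Metric.mem_nhds_iff.mp (mem_interior_iff_mem_nhds.mp hx0)
  obtain ⟨v, hv⟩ := exists_ne (0 : V n)
  have hvn : 0 < ‖v‖ := norm_pos_iff.mpr hv
  set x1 := x0 + (δ / (2 * ‖v‖)) • v with hx1def
  have hx1K : x1 ∈ K := by
    apply hδ
    rw [Metric.mem_ball, dist_eq_norm]
    have : x1 - x0 = (δ / (2 * ‖v‖)) • v := by rw [hx1def]; abel
    rw [this, norm_smul, Real.norm_eq_abs, abs_of_pos (by positivity)]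
    have hkey : δ / (2 * ‖v‖) * ‖v‖ = δ / 2 := by field_simp
    rw [hkey]
    linarith
  have hx10 : x1 - x0 ≠ 0 := by
    rw [hx1def]
    simp only [add_sub_cancel_left]
    exact smul_ne_zero (by positivity) hv
  have hd0 : 0 < gauge B (x1 - x0) := by
    rcases eq_or_lt_of_le (gauge_nonneg (x1 - x0)) with h | h
    · exact absurd ((gauge_eq_zero (absB hB) (vnbB hB)).mp h.symm) hx10
    · exact h
  -- circumradius facts
  have hRnn : 0 ≤ R := Real.sInf_nonneg fun ρ hρ => hρ.1.le
  have hpair : ∀ x ∈ K, ∀ y ∈ K, gauge B (x - y) ≤ D :=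
    fun x hx y hy => gauge_le_mdiam hB hRnn hc hx hy
  have hDpos : 0 < D := lt_of_lt_of_le hd0 (hpair _ hx1K _ (interior_subset hx0))
  have hKD : K ⊆ x1 +ᵥ D • B := fun y hy =>
    (mem_ball_iff hB hDpos).mpr (hpair y hy x1 hx1K)
  have hRD : R ≤ D := circum_le hDpos hKD
  have hD2R : D ≤ 2 * R := by
    refine mdiam_le hKne fun x hx y hy => ?_
    have h1 : gauge B (x - c) ≤ R := gauge_le_of_mem_ball hB hRnn (hc hx)
    have h2 : gauge B (c - y) ≤ R := by
      rw [← gauge_negB hB, neg_sub]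
      exact gauge_le_of_mem_ball hB hRnn (hc hy)
    calc gauge B (x - y) ≤ gauge B (x - c) + gauge B (c - y) := gauge_tri hB x y c
      _ ≤ 2 * R := by linarith
  have hRpos : 0 < R := by
    have hlb : gauge B (x1 - x0) / 2 ≤ R := by
      refine le_csInf ⟨D, hDpos, x1, hKD⟩ ?_
      rintro ρ ⟨hρpos, c', hball⟩
      have h1 : gauge B (x1 - c') ≤ ρ :=
        gauge_le_of_mem_ball hB hρpos.le (hball hx1K)
      have h2 : gauge B (c' - x0) ≤ ρ := by
        rw [← gauge_negB hB, neg_sub]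
        exact gauge_le_of_mem_ball hB hρpos.le (hball (interior_subset hx0))
      have := gauge_tri hB x1 x0 c'
      linarith
    linarith
  -- pseudo-completion facts
  have hDRnn : 0 ≤ D - R := by linarith
  have hGball : G ⊆ c +ᵥ R • B := by
    intro x hx
    rw [hGdef] at hx
    exact (mem_ball_iff hB hRpos).mpr
      ((gauge_le_of_mem_ball hB hDRnn hx).trans (by linarith))
  have hGmem : ∀ x ∈ G, gauge B (x - c) ≤ D - R := fun x hx => by
    rw [hGdef] at hx; exact gauge_le_of_mem_ball hB hDRnn hx
  have hGP : G ⊆ P := by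
    rw [hPhull]; exact Set.subset_union_right.trans (subset_convexHull ℝ _)
  have hballconv : Convex ℝ (c +ᵥ R • B) := (hB.1.1.smul R).vadd c
  have hPball : P ⊆ c +ᵥ R • B := by
    rw [hPhull]
    exact convexHull_min (Set.union_subset hc hGball) hballconv
  have hUG : ∀ x ∈ K ∪ G, ∀ y ∈ K ∪ G, gauge B (x - y) ≤ D := by
    rintro x (hx | hx) y (hy | hy)
    · exact hpair _ hx _ hy
    · have h1 : gauge B (x - c) ≤ R := gauge_le_of_mem_ball hB hRnn (hc hx)
      have h2 : gauge B (c - y) ≤ D - R := by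
        rw [← gauge_negB hB, neg_sub]; exact hGmem y hy
      have := gauge_tri hB x y c
      linarith
    · have h1 : gauge B (x - c) ≤ D - R := hGmem x hx
      have h2 : gauge B (c - y) ≤ R := by
        rw [← gauge_negB hB, neg_sub]
        exact gauge_le_of_mem_ball hB hRnn (hc hy)
      have := gauge_tri hB x y c
      linarith
    · have h1 : gauge B (x - c) ≤ D - R := hGmem x hx
      have h2 : gauge B (c - y) ≤ D - R := by
        rw [← gauge_negB hB, neg_sub]; exact hGmem y hy
      have := gauge_tri hB x y c
      linarith
  have hPpair : ∀ x ∈ P, ∀ y ∈ P, gauge B (x - y) ≤ D := by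
    have step1 : ∀ y ∈ K ∪ G, P ⊆ y +ᵥ D • B := by
      intro y hy
      rw [hPhull]
      exact convexHull_min
        (fun x hx => (mem_ball_iff hB hDpos).mpr (hUG x hx y hy))
        ((hB.1.1.smul D).vadd y)
    intro x hx y hy
    have step2 : P ⊆ x +ᵥ D • B := by
      rw [hPhull]
      refine convexHull_min (fun z hz => (mem_ball_iff hB hDpos).mpr ?_)
        ((hB.1.1.smul D).vadd x)
      have := (mem_ball_iff hB hDpos).mp (step1 z hz hx)
      rwa [← gauge_negB hB, neg_sub] at this
    have := (mem_ball_iff hB hDpos).mp (step2 hy)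
    rwa [← gauge_negB hB, neg_sub] at this
  have claim1 : mdiam B P = D := by
    refine le_antisymm (mdiam_le hPne hPpair) ?_
    exact csSup_le_csSup (diam_bddAbove hB hRnn hPball)
      ⟨gauge B (x0 - x0), x0, interior_subset hx0, x0, interior_subset hx0, rfl⟩
      (by rintro d ⟨x, hx, y, hy, rfl⟩; exact ⟨x, hKP hx, y, hKP hy, rfl⟩)
  have claim2 : circum B P = R := by
    refine le_antisymm (circum_le hRpos hPball) ?_
    exact csInf_le_csInf circum_bddBelow ⟨R, hRpos, c, hPball⟩
      (by rintro ρ ⟨h1, c', h2⟩; exact ⟨h1, c', hKP.trans h2⟩)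
  refine ⟨claim1, claim2, ?_⟩
  rintro Kstar ⟨⟨⟨hSconv, hScomp, y0, hy0⟩, hScmpl⟩, hKS, hSdiam⟩ hSball
  rw [← hDdef] at hSdiam
  have hSne : Kstar.Nonempty := ⟨y0, interior_subset hy0⟩
  have hSpair : ∀ x ∈ Kstar, ∀ y ∈ Kstar, gauge B (x - y) ≤ D := by
    intro x hx y hy
    have := gauge_le_mdiam hB hRnn hSball hx hy
    rwa [hSdiam] at this
  -- the small ball G is contained in every completion inside the circumball
  have hGS : G ⊆ Kstar := by
    intro x hx
    by_contra hxS
    have hlt := hScmpl x hxS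
    rw [hSdiam] at hlt
    have hub : mdiam B (Kstar ∪ {x}) ≤ D := by
      refine mdiam_le ⟨x, Or.inr rfl⟩ ?_
      rintro a (ha | ha) b (hb | hb)
      · exact hSpair _ ha _ hb
      · rw [Set.mem_singleton_iff] at hb; subst hb
        have h1 : gauge B (a - c) ≤ R := gauge_le_of_mem_ball hB hRnn (hSball ha)
        have h2 : gauge B (c - b) ≤ D - R := by
          rw [← gauge_negB hB, neg_sub]; exact hGmem b hx
        have := gauge_tri hB a b c
        linarith
      · rw [Set.mem_singleton_iff] at ha; subst ha
        have h1 : gauge B (a - c) ≤ D - R := hGmem a hx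
        have h2 : gauge B (c - b) ≤ R := by
          rw [← gauge_negB hB, neg_sub]
          exact gauge_le_of_mem_ball hB hRnn (hSball hb)
        have := gauge_tri hB a b c
        linarith
      · rw [Set.mem_singleton_iff] at ha hb; subst ha; subst hb
        simp only [sub_self, gauge_zero]
        linarith
    linarith
  have hPS : P ⊆ Kstar := by
    rw [hPhull]
    exact convexHull_min (Set.union_subset hKS hGS) hSconv
  -- inradius upper bound for any admissible superset of K
  have hinub : ∀ L : Set (V n), K ⊆ L →
      (∀ x ∈ L, ∀ y ∈ L, gauge B (x - y) ≤ D) →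
      ∀ ρ : ℝ, (0 < ρ ∧ ∃ z : V n, z +ᵥ ρ • B ⊆ L) → ρ ≤ D - R := by
    rintro L hKL hdL ρ ⟨hρpos, z, hz⟩
    by_contra hcon
    push_neg at hcon
    have hpt : ∀ p ∈ K, gauge B (p - z) ≤ max (D - ρ) (R / 2) := by
      intro p hp
      rcases eq_or_lt_of_le (gauge_nonneg (p - z)) with hg0 | hgpos
      · rw [← hg0]; exact le_max_of_le_right (by linarith)
      · set g := gauge B (p - z) with hgd
        have hq : z - (ρ / g) • (p - z) ∈ L := by
          apply hz
          rw [mem_ball_iff hB hρpos]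
          have he : z - (ρ / g) • (p - z) - z = -((ρ / g) • (p - z)) := by module
          rw [he, gauge_negB hB, gauge_smul_of_nonneg (by positivity), smul_eq_mul,
            ← hgd, div_mul_cancel₀ _ hgpos.ne']
        have hpq : gauge B (p - (z - (ρ / g) • (p - z))) = g + ρ := by
          have he : p - (z - (ρ / g) • (p - z)) = (1 + ρ / g) • (p - z) := by module
          rw [he, gauge_smul_of_nonneg (by positivity), smul_eq_mul, ← hgd]
          field_simp
        have hle := hdL p (hKL hp) _ hq
        rw [hpq] at hle
        exact le_max_of_le_left (by linarith)
    have htpos : 0 < max (D - ρ) (R / 2) := lt_max_of_lt_right (by linarith)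
    have h1 : R ≤ max (D - ρ) (R / 2) :=
      circum_le htpos fun p hp => (mem_ball_iff hB htpos).mpr (hpt p hp)
    have h2 : max (D - ρ) (R / 2) < R := max_lt (by linarith) (by linarith)
    linarith
  -- positivity of D - R
  obtain ⟨Mb, hMb⟩ := hB.1.2.1.isBounded.subset_closedBall 0
  set M := max Mb 1 with hMdef
  have hMpos : (0 : ℝ) < M := lt_of_lt_of_le one_pos (le_max_right _ _)
  have hBM : B ⊆ Metric.closedBall 0 M :=
    hMb.trans (Metric.closedBall_subset_closedBall (le_max_left _ _))
  obtain ⟨δs, hδspos, hδs⟩ : ∃ δ > 0, Metric.ball y0 δ ⊆ Kstar :=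
    Metric.mem_nhds_iff.mp (mem_interior_iff_mem_nhds.mp hy0)
  have hρ0sub : y0 +ᵥ (δs / (2 * M)) • B ⊆ Kstar := by
    intro x hx
    rw [mem_vadd_iff] at hx
    obtain ⟨b, hb, hbe⟩ := hx
    apply hδs
    rw [Metric.mem_ball, dist_eq_norm]
    have hxy : x - y0 = (δs / (2 * M)) • b := hbe.symm
    rw [hxy, norm_smul, Real.norm_eq_abs, abs_of_pos (by positivity)]
    have hbn : ‖b‖ ≤ M := by
      have := hBM hb
      rwa [Metric.mem_closedBall, dist_zero_right] at this
    calc δs / (2 * M) * ‖b‖ ≤ δs / (2 * M) * M := by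
          exact mul_le_mul_of_nonneg_left hbn (by positivity)
      _ = δs / 2 := by field_simp
      _ < δs := by linarith
  have hDRpos : 0 < D - R :=
    lt_of_lt_of_le (by positivity : (0:ℝ) < δs / (2 * M))
      (hinub Kstar hKS hSpair _ ⟨by positivity, y0, hρ0sub⟩)
  -- inradius value
  have hinval : ∀ L : Set (V n), K ⊆ L →
      (∀ x ∈ L, ∀ y ∈ L, gauge B (x - y) ≤ D) → G ⊆ L →
      inrad B L = D - R := by
    intro L hKL hdL hGL
    have hmem : (D - R) ∈ {ρ : ℝ | 0 < ρ ∧ ∃ z : V n, z +ᵥ ρ • B ⊆ L} :=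
      ⟨hDRpos, c, by rw [← hGdef]; exact hGL⟩
    refine le_antisymm (csSup_le ⟨D - R, hmem⟩ (hinub L hKL hdL)) ?_
    exact le_csSup ⟨D - R, hinub L hKL hdL⟩ hmem
  -- asymmetry value
  have hasval : ∀ L : Set (V n), K ⊆ L →
      (∀ x ∈ L, ∀ y ∈ L, gauge B (x - y) ≤ D) → G ⊆ L →
      L ⊆ c +ᵥ R • B → asym L = R / (D - R) := by
    intro L hKL hdL hGL hLball
    set ρ₀ := R / (D - R) with hρ₀def
    have hρ₀pos : 0 < ρ₀ := div_pos hRpos hDRpos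
    have hmem : ρ₀ ∈ {ρ : ℝ | 0 < ρ ∧ ∃ z : V n, -L ⊆ z +ᵥ ρ • L} := by
      refine ⟨hρ₀pos, -((1 + ρ₀) • c), ?_⟩
      intro y hy
      rw [Set.mem_neg] at hy
      rw [mem_vadd_iff, Set.mem_smul_set]
      refine ⟨c + ρ₀⁻¹ • (c + y), ?_, ?_⟩
      · apply hGL
        rw [hGdef, mem_ball_iff hB hDRpos]
        have he : c + ρ₀⁻¹ • (c + y) - c = ρ₀⁻¹ • (c + y) := by module
        rw [he, gauge_smul_of_nonneg (by positivity), smul_eq_mul]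
        have hgy : gauge B (c + y) ≤ R := by
          have h1 : gauge B (-y - c) ≤ R := gauge_le_of_mem_ball hB hRnn (hLball hy)
          have he2 : c + y = -(-y - c) := by module
          rw [he2, gauge_negB hB]
          exact h1
        have hinv : ρ₀⁻¹ = (D - R) / R := by rw [hρ₀def, inv_div]
        rw [hinv]
        calc (D - R) / R * gauge B (c + y) ≤ (D - R) / R * R :=
              mul_le_mul_of_nonneg_left hgy (by positivity)
          _ = D - R := div_mul_cancel₀ _ hRpos.ne'
      · rw [smul_add, smul_inv_smul₀ hρ₀pos.ne']
        module
    have hlb : ∀ ρ : ℝ, (0 < ρ ∧ ∃ z : V n, -L ⊆ z +ᵥ ρ • L) → ρ₀ ≤ ρ := by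
      rintro ρ ⟨hρpos, z, hzsub⟩
      have h1ρ : (0:ℝ) < 1 + ρ := by linarith
      have hKsub : K ⊆ (-((1 + ρ)⁻¹ • z)) +ᵥ (ρ * D / (1 + ρ)) • B := by
        intro x hx
        have hnx : -x ∈ -L := Set.neg_mem_neg.mpr (hKL hx)
        have hmem2 := hzsub hnx
        rw [mem_vadd_iff, Set.mem_smul_set] at hmem2
        obtain ⟨l, hl, hle⟩ := hmem2
        have hgl : gauge B (x - l) ≤ D := hdL x (hKL hx) l hl
        have hl' : l = ρ⁻¹ • (-x - z) := by
          rw [← hle, inv_smul_smul₀ hρpos.ne']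
        have hxl : x - l = ((1 + ρ) / ρ) • (x + (1 + ρ)⁻¹ • z) := by
          rw [hl']
          match_scalars <;> field_simp <;> ring
        rw [hxl, gauge_smul_of_nonneg (by positivity), smul_eq_mul] at hgl
        rw [mem_ball_iff hB (by positivity)]
        have he : x - -((1 + ρ)⁻¹ • z) = x + (1 + ρ)⁻¹ • z := by module
        rw [he]
        rw [le_div_iff₀ h1ρ]
        have h3 : 0 ≤ gauge B (x + (1 + ρ)⁻¹ • z) := gauge_nonneg _
        have h4 : (1 + ρ) / ρ * gauge B (x + (1 + ρ)⁻¹ • z) ≤ D := hgl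
        rw [div_mul_eq_mul_div, div_le_iff₀ hρpos] at h4
        nlinarith [h3, h4]
      have hR' : R ≤ ρ * D / (1 + ρ) := circum_le (by positivity) hKsub
      rw [le_div_iff₀ h1ρ] at hR'
      rw [hρ₀def, div_le_iff₀ hDRpos]
      nlinarith [hR']
    refine le_antisymm (csInf_le ⟨0, fun ρ hρ => hρ.1.le⟩ hmem) ?_
    exact le_csInf ⟨ρ₀, hmem⟩ hlb
  constructor
  · rw [hinval P hKP hPpair hGP, hinval Kstar hKS hSpair hGS]
  · rw [hasval P hKP hPpair hGP hPball, hasval Kstar hKS hSpair hGS hSball]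
end
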